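/- arXiv:2505.09765 — 13 statements merged into one kernel-verified Lean document; each statement's English description precedes it below -/
import Mathlib

section
/- Assume: (i) the primal problem min_{u∈V} F(u)+G(Bu) admits a solution u* (unique by strong convexity of F); (ii) the Fenchel–Rockafellar condition holds, so the dual problem min_{p∈W} F*(−Bᵗp)+G*(p) admits a solution p*; (iii) F : V → ℝ is μ-strongly convex for some μ > 0. If the sequence {u^{(n)}} ⊂ V is a dualization of the sequence {p^{(n)}} ⊂ W, i.e., −Bᵗp^{(n)} ∈ ∂F(u^{(n)}) for all n ≥ 1, then ‖u^{(n)} − u*‖ ≤ (‖B‖/μ)‖p^{(n)} − p*‖ for all n ≥ 1, where ‖B‖ is the operator norm of B. In particular, p^{(n)} → p* implies u^{(n)} → u*. -/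
open scoped RealInnerProductSpace
open Filter Topology

noncomputable section

/-- The Legendre–Fenchel conjugate of an extended-real-valued function. -/
def fenchelConj {E : Type*} [NormedAddCommGroup E] [InnerProductSpace ℝ E]
    (F : E → EReal) (x : E) : EReal :=
  ⨆ u : E, (((⟪x, u⟫ : ℝ) : EReal) - F u)

/-- The Legendre–Fenchel conjugate of a real-valued function. -/
def fenchelConjR {E : Type*} [NormedAddCommGroup E] [InnerProductSpace ℝ E]
    (F : E → ℝ) (x : E) : EReal :=
  ⨆ u : E, ((⟪x, u⟫ - F u : ℝ) : EReal)

/-- The subdifferential of a real-valued function. -/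
def subdiffR {E : Type*} [NormedAddCommGroup E] [InnerProductSpace ℝ E]
    (F : E → ℝ) (u : E) : Set E :=
  {x | ∀ v : E, F u + ⟪x, v - u⟫ ≤ F v}

/-- Properness of an extended-real-valued function. -/
def ProperFn {E : Type*} (F : E → EReal) : Prop :=
  (∃ u, F u ≠ ⊤) ∧ ∀ u, F u ≠ ⊥

/-- Convexity of an extended-real-valued function. -/
def ConvexFn {E : Type*} [AddCommGroup E] [Module ℝ E] (F : E → EReal) : Prop :=
  ∀ u v : E, ∀ t : ℝ, 0 ≤ t → t ≤ 1 →
    F ((1 - t) • u + t • v) ≤ ((1 - t : ℝ) : EReal) * F u + ((t : ℝ) : EReal) * F v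

/-- Theorem 2.3. If `F` is `μ`-strongly convex, the primal problem admits a
solution `u*`, the Fenchel–Rockafellar condition holds and the dual problem admits a solution
`p*`, and `{u⁽ⁿ⁾}` is a dualization of `{p⁽ⁿ⁾}` (i.e. `−Bᵗp⁽ⁿ⁾ ∈ ∂F(u⁽ⁿ⁾)` for `n ≥ 1`),
then `‖u⁽ⁿ⁾ − u*‖ ≤ (‖B‖/μ)‖p⁽ⁿ⁾ − p*‖` for all `n ≥ 1`; in particular convergence of the
dual iterates implies convergence of the primal iterates. -/
theorem dualization_convergence
    {V W : Type*}
    [NormedAddCommGroup V] [InnerProductSpace ℝ V] [FiniteDimensional ℝ V]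
    [NormedAddCommGroup W] [InnerProductSpace ℝ W] [FiniteDimensional ℝ W]
    (F : V → ℝ) (G : W → EReal) (B : V →L[ℝ] W) (Bt : W →L[ℝ] V)
    (hadj : ∀ (v : V) (w : W), ⟪B v, w⟫ = ⟪v, Bt w⟫)
    (hFconvex : ConvexOn ℝ Set.univ F)
    (hGproper : ProperFn G) (hGconvex : ConvexFn G) (hGlsc : LowerSemicontinuous G)
    -- (iii) `F` is `μ`-strongly convex
    (μ : ℝ) (hμ : 0 < μ)
    (hFsc : ∀ u v x : V, x ∈ subdiffR F v →
      F v + ⟪x, u - v⟫ + μ / 2 * ‖u - v‖ ^ 2 ≤ F u)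
    -- (i) the primal problem admits a solution `u*`
    (ustar : V)
    (hprimal : ∀ u : V, ((F ustar : ℝ) : EReal) + G (B ustar) ≤ ((F u : ℝ) : EReal) + G (B u))
    -- (ii) the Fenchel–Rockafellar condition: the value function `H` is subdifferentiable at 0
    (hFR : ∃ x : W, ∀ q : W,
      (⨅ u : V, (((F u : ℝ) : EReal) + G (B u))) + ((⟪x, q - 0⟫ : ℝ) : EReal) ≤
        ⨅ u : V, (((F u : ℝ) : EReal) + G (B u + q)))
    -- `p*` is a solution of the dual problem
    (pstar : W)
    (hdual : ∀ p : W,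
      fenchelConjR F (-(Bt pstar)) + fenchelConj G pstar ≤
        fenchelConjR F (-(Bt p)) + fenchelConj G p)
    -- `{u⁽ⁿ⁾}` is a dualization of `{p⁽ⁿ⁾}`
    (u : ℕ → V) (p : ℕ → W)
    (hdualization : ∀ n : ℕ, 1 ≤ n → -(Bt (p n)) ∈ subdiffR F (u n)) :
    (∀ n : ℕ, 1 ≤ n → ‖u n - ustar‖ ≤ ‖B‖ / μ * ‖p n - pstar‖) ∧
      (Tendsto p atTop (𝓝 pstar) → Tendsto u atTop (𝓝 ustar)) := by
  classical
  obtain ⟨x, hx⟩ := hFR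
  obtain ⟨w0, hw0⟩ := hGproper.1
  have hGbot := hGproper.2
  set c : EReal := ((F ustar : ℝ) : EReal) + G (B ustar) with hc
  have hinf : (⨅ u : V, (((F u : ℝ) : EReal) + G (B u))) = c :=
    le_antisymm (iInf_le _ ustar) (le_iInf hprimal)
  have hcbot : c ≠ ⊥ := by
    rw [hc, Ne, EReal.add_eq_bot_iff]
    push_neg
    exact ⟨EReal.coe_ne_bot _, hGbot _⟩
  have hctop : c ≠ ⊤ := by
    intro htop
    have h1 := hx (w0 - B ustar)
    rw [hinf, htop] at h1
    have h2 : (⨅ u : V, (((F u : ℝ) : EReal) + G (B u + (w0 - B ustar)))) ≤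
        ((F ustar : ℝ) : EReal) + G w0 := by
      have h3 := iInf_le (fun u : V => (((F u : ℝ) : EReal) + G (B u + (w0 - B ustar)))) ustar
      simpa using h3
    have h4 : ((F ustar : ℝ) : EReal) + G w0 < ⊤ :=
      EReal.add_lt_top (EReal.coe_ne_top _) hw0
    have h5 : (⊤ : EReal) ≤ ((F ustar : ℝ) : EReal) + G w0 := by
      calc (⊤ : EReal) = ⊤ + ((⟪x, (w0 - B ustar) - 0⟫ : ℝ) : EReal) :=
            (EReal.top_add_coe _).symm
        _ ≤ _ := le_trans h1 h2
    exact absurd (lt_of_le_of_lt h5 h4) (lt_irrefl _)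
  -- G (B ustar) is real
  have hGBtop : G (B ustar) ≠ ⊤ := by
    intro h; rw [hc, h, EReal.add_top_of_ne_bot (EReal.coe_ne_bot _)] at hctop; exact hctop rfl
  set g : ℝ := (G (B ustar)).toReal with hgdef
  have hg : G (B ustar) = (g : EReal) := (EReal.coe_toReal hGBtop (hGbot _)).symm
  set cR : ℝ := F ustar + g with hcR
  have hccR : c = ((cR : ℝ) : EReal) := by rw [hc, hg, hcR, EReal.coe_add]
  -- the key inequality from the Fenchel–Rockafellar condition
  have key : ∀ (v : V) (w : W),
      ((cR : ℝ) : EReal) + ((⟪x, w - B v⟫ : ℝ) : EReal) ≤ ((F v : ℝ) : EReal) + G w := by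
    intro v w
    have h1 := hx (w - B v)
    rw [hinf, hccR] at h1
    refine le_trans (le_trans (le_of_eq ?_) h1) ?_
    · norm_num
    · have h3 := iInf_le (fun u : V => (((F u : ℝ) : EReal) + G (B u + (w - B v)))) v
      simpa using h3
  -- abbreviations for conjugate "terms"
  set au : V → ℝ := fun v => ⟪-(Bt x), v⟫ - F v with hau
  -- key2 : each G*-term is bounded
  have key2 : ∀ (v : V) (w : W),
      ((⟪x, w⟫ : ℝ) : EReal) - G w ≤ ((-cR - au v : ℝ) : EReal) := by
    intro v w
    by_cases hGw : G w = ⊤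
    · rw [hGw]
      simp
    · obtain ⟨gw, hgw⟩ : ∃ gw : ℝ, G w = (gw : EReal) :=
        ⟨(G w).toReal, (EReal.coe_toReal hGw (hGbot _)).symm⟩
      have h1 := key v w
      rw [hgw] at h1 ⊢
      rw [← EReal.coe_sub]
      have h2 : cR + ⟪x, w - B v⟫ ≤ F v + gw := by
        rw [← EReal.coe_add, ← EReal.coe_add] at h1
        exact_mod_cast h1
      rw [EReal.coe_le_coe_iff]
      have h3 : ⟪x, w - B v⟫ = ⟪x, w⟫ - ⟪x, B v⟫ := by rw [inner_sub_right]
      have h4 : ⟪x, B v⟫ = ⟪Bt x, v⟫ := by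
        rw [real_inner_comm (B v) x, hadj, real_inner_comm]
      have h5 : au v = -⟪Bt x, v⟫ - F v := by
        rw [hau]; simp [inner_neg_left]
      rw [h5]
      rw [h3, h4] at h2
      linarith
  -- G* x is real
  have hbub : fenchelConj G x ≤ ((-cR - au ustar : ℝ) : EReal) := iSup_le (key2 ustar)
  have hblb : ((⟪x, w0⟫ - (G w0).toReal : ℝ) : EReal) ≤ fenchelConj G x := by
    have h1 := le_iSup (fun w : W => ((⟪x, w⟫ : ℝ) : EReal) - G w) w0
    rw [show G w0 = (((G w0).toReal : ℝ) : EReal) from (EReal.coe_toReal hw0 (hGbot _)).symm]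
        at h1
    rw [EReal.coe_sub]
    exact h1
  have hbbot : fenchelConj G x ≠ ⊥ := fun h => by
    rw [h] at hblb; exact (EReal.coe_ne_bot _) (le_bot_iff.1 hblb)
  have hbtop : fenchelConj G x ≠ ⊤ := fun h => by
    rw [h] at hbub; exact (EReal.coe_ne_top _) (top_le_iff.1 hbub)
  set bR : ℝ := (fenchelConj G x).toReal with hbRdef
  have hbR : fenchelConj G x = (bR : EReal) := (EReal.coe_toReal hbtop hbbot).symm
  -- F*-terms bounded
  have key3 : ∀ v : V, au v ≤ -cR - bR := by
    intro v
    have h1 : fenchelConj G x ≤ ((-cR - au v : ℝ) : EReal) := iSup_le (key2 v)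
    rw [hbR, EReal.coe_le_coe_iff] at h1
    linarith
  have hax : fenchelConjR F (-(Bt x)) + fenchelConj G x ≤ ((-cR : ℝ) : EReal) := by
    have h1 : fenchelConjR F (-(Bt x)) ≤ ((-cR - bR : ℝ) : EReal) :=
      iSup_le fun v => EReal.coe_le_coe_iff.2 (key3 v)
    calc fenchelConjR F (-(Bt x)) + fenchelConj G x
        ≤ ((-cR - bR : ℝ) : EReal) + ((bR : ℝ) : EReal) := by
          rw [hbR]; exact add_le_add h1 le_rfl
      _ = ((-cR : ℝ) : EReal) := by rw [← EReal.coe_add]; norm_num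
  -- weak duality lower bounds at p*
  set r1 : ℝ := ⟪-(Bt pstar), ustar⟫ - F ustar with hr1
  set r2 : ℝ := ⟪pstar, B ustar⟫ - g with hr2
  have hr12 : r1 + r2 = -cR := by
    have h1 : ⟪pstar, B ustar⟫ = ⟪Bt pstar, ustar⟫ := by
      rw [real_inner_comm (B ustar) pstar, hadj, real_inner_comm]
    rw [hr1, hr2, hcR, h1]
    simp [inner_neg_left]
    ring
  have ha1 : ((r1 : ℝ) : EReal) ≤ fenchelConjR F (-(Bt pstar)) :=
    le_iSup (fun v : V => ((⟪-(Bt pstar), v⟫ - F v : ℝ) : EReal)) ustar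
  have ha2 : ((r2 : ℝ) : EReal) ≤ fenchelConj G pstar := by
    have h1 := le_iSup (fun w : W => ((⟪pstar, w⟫ : ℝ) : EReal) - G w) (B ustar)
    rw [hg] at h1
    rw [hr2, EReal.coe_sub]
    exact h1
  -- the dual optimal value equals -cR and the F*-part is exactly r1
  have hsumle : fenchelConjR F (-(Bt pstar)) + fenchelConj G pstar ≤ ((-cR : ℝ) : EReal) :=
    le_trans (hdual x) hax
  set astar := fenchelConjR F (-(Bt pstar)) with hastar
  set bstar := fenchelConj G pstar with hbstar
  have hastarbot : astar ≠ ⊥ := fun h => by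
    rw [h] at ha1; exact (EReal.coe_ne_bot _) (le_bot_iff.1 ha1)
  have hbstarbot : bstar ≠ ⊥ := fun h => by
    rw [h] at ha2; exact (EReal.coe_ne_bot _) (le_bot_iff.1 ha2)
  have hastartop : astar ≠ ⊤ := by
    intro h
    rw [h, EReal.top_add_of_ne_bot hbstarbot] at hsumle
    exact (EReal.coe_ne_top _) (top_le_iff.1 hsumle)
  have hbstartop : bstar ≠ ⊤ := by
    intro h
    rw [h, EReal.add_top_of_ne_bot hastarbot] at hsumle
    exact (EReal.coe_ne_top _) (top_le_iff.1 hsumle)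
  obtain ⟨aR, haR⟩ : ∃ aR : ℝ, astar = (aR : EReal) :=
    ⟨astar.toReal, (EReal.coe_toReal hastartop hastarbot).symm⟩
  obtain ⟨bRs, hbRs⟩ : ∃ bRs : ℝ, bstar = (bRs : EReal) :=
    ⟨bstar.toReal, (EReal.coe_toReal hbstartop hbstarbot).symm⟩
  have hsumR : aR + bRs ≤ -cR := by
    rw [haR, hbRs, ← EReal.coe_add, EReal.coe_le_coe_iff] at hsumle; exact hsumle
  have haR1 : r1 ≤ aR := by rw [haR, EReal.coe_le_coe_iff] at ha1; exact ha1
  have hbR2 : r2 ≤ bRs := by rw [hbRs, EReal.coe_le_coe_iff] at ha2; exact ha2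
  have haReq : aR = r1 := by linarith
  -- optimality condition: −Bᵗp* ∈ ∂F(u*)
  have hstar : -(Bt pstar) ∈ subdiffR F ustar := by
    intro v
    have h1 : ((⟪-(Bt pstar), v⟫ - F v : ℝ) : EReal) ≤ astar :=
      le_iSup (fun v : V => ((⟪-(Bt pstar), v⟫ - F v : ℝ) : EReal)) v
    rw [haR, haReq, EReal.coe_le_coe_iff, hr1] at h1
    have h2 : ⟪-(Bt pstar), v - ustar⟫ = ⟪-(Bt pstar), v⟫ - ⟪-(Bt pstar), ustar⟫ :=
      inner_sub_right _ _ _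
    rw [h2]
    linarith
  -- the main estimate
  have main : ∀ n : ℕ, 1 ≤ n → ‖u n - ustar‖ ≤ ‖B‖ / μ * ‖p n - pstar‖ := by
    intro n hn
    set d : V := u n - ustar with hd
    have h1 := hFsc ustar (u n) (-(Bt (p n))) (hdualization n hn)
    have h2 := hFsc (u n) ustar (-(Bt pstar)) hstar
    have hnorm : ‖ustar - u n‖ = ‖d‖ := by rw [hd, norm_sub_rev]
    have hsub : ustar - u n = -d := by rw [hd]; abel
    rw [hnorm, hsub] at h1
    have hkey : μ * ‖d‖ ^ 2 ≤ ⟪Bt pstar - Bt (p n), d⟫ := by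
      have e1 : ⟪-(Bt (p n)), -d⟫ = ⟪Bt (p n), d⟫ := by
        rw [inner_neg_left, inner_neg_right]; ring
      have e2 : ⟪-(Bt pstar), d⟫ = -⟪Bt pstar, d⟫ := by rw [inner_neg_left]
      have e3 : ⟪Bt pstar - Bt (p n), d⟫ = ⟪Bt pstar, d⟫ - ⟪Bt (p n), d⟫ :=
        inner_sub_left _ _ _
      rw [e1] at h1
      rw [e2] at h2
      rw [e3]
      linarith
    have hBd : ⟪Bt pstar - Bt (p n), d⟫ = ⟪pstar - p n, B d⟫ := by
      rw [real_inner_comm (B d) (pstar - p n), hadj, real_inner_comm, map_sub]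
    have hcs : ⟪pstar - p n, B d⟫ ≤ ‖pstar - p n‖ * ‖B d‖ := real_inner_le_norm _ _
    have hop : ‖B d‖ ≤ ‖B‖ * ‖d‖ := B.le_opNorm d
    have hfinal : μ * ‖d‖ ^ 2 ≤ ‖pstar - p n‖ * (‖B‖ * ‖d‖) := by
      calc μ * ‖d‖ ^ 2 ≤ ⟪pstar - p n, B d⟫ := by rw [← hBd]; exact hkey
        _ ≤ ‖pstar - p n‖ * ‖B d‖ := hcs
        _ ≤ ‖pstar - p n‖ * (‖B‖ * ‖d‖) := by
            exact mul_le_mul_of_nonneg_left hop (norm_nonneg _)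
    rw [norm_sub_rev pstar (p n)] at hfinal
    rcases eq_or_lt_of_le (norm_nonneg d) with hd0 | hd0
    · rw [← hd0]
      positivity
    · have h6 : μ * ‖d‖ ≤ ‖B‖ * ‖p n - pstar‖ := by nlinarith
      rw [div_mul_eq_mul_div, le_div_iff₀ hμ]
      linarith [mul_comm ‖d‖ μ]
  refine ⟨main, fun hp => ?_⟩
  rw [tendsto_iff_norm_sub_tendsto_zero] at hp ⊢
  have hb : Tendsto (fun n => ‖B‖ / μ * ‖p n - pstar‖) atTop (𝓝 0) := by
    have := hp.const_mul (‖B‖ / μ)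
    simpa using this
  refine squeeze_zero' (Eventually.of_forall fun n => norm_nonneg _) ?_ hb
  filter_upwards [eventually_ge_atTop 1] with n hn
  exact main n hn
end
end

section
/- Under the compatibility assumption E_j(w_j; u₁ + ⋯ + u_J) = Ẽ_j(u_j + w_j; (u₁, …, u_J)) for all w_j ∈ V_j and (u₁, …, u_J) ∈ Ṽ, the parallel subspace correction method is equivalent to the relaxed block Jacobi method: if the initial iterates satisfy u^{(0)} = Σ_{j=1}^J u_j^{(0)}, then u^{(n)} = Σ_{j=1}^J u_j^{(n)} for all n ≥ 1. -/
open scoped RealInnerProductSpace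

noncomputable section

/-- Theorem 3.4(a). Under the compatibility assumption
`E_j(w_j; u₁ + ⋯ + u_J) = Ẽ_j(u_j + w_j; (u₁, …, u_J))`, the parallel subspace correction
method (PSC) is equivalent to the relaxed block Jacobi method: if `u⁽⁰⁾ = Σⱼ uⱼ⁽⁰⁾`, then
`u⁽ⁿ⁾ = Σⱼ uⱼ⁽ⁿ⁾` for all `n ≥ 1`. -/
theorem psc_eq_relaxed_block_jacobi
    {V : Type*} [NormedAddCommGroup V] [InnerProductSpace ℝ V] [FiniteDimensional ℝ V]
    (J : ℕ) (Vsub : Fin J → Submodule ℝ V)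
    -- space decomposition `V = V₁ + ⋯ + V_J`
    (hdecomp : ∀ u : V, ∃ w : Fin J → V, (∀ j, w j ∈ Vsub j) ∧ u = ∑ j, w j)
    (τ : ℝ) (hτ : 0 < τ)
    -- local energies `E j w u = E_j(w; u)` and `Et j x ũ = Ẽ_j(x; ũ)`
    (E : Fin J → V → V → ℝ) (Et : Fin J → V → (Fin J → V) → ℝ)
    -- each local problem admits a unique minimizer over the corresponding subspace
    (hEuniq : ∀ (j : Fin J) (uold : V),
      ∃! x : V, x ∈ Vsub j ∧ ∀ y ∈ Vsub j, E j x uold ≤ E j y uold)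
    (hEtuniq : ∀ (j : Fin J) (utold : Fin J → V),
      ∃! x : V, x ∈ Vsub j ∧ ∀ y ∈ Vsub j, Et j x utold ≤ Et j y utold)
    -- compatibility assumption
    (hcompat : ∀ (j : Fin J) (wj : V), wj ∈ Vsub j →
      ∀ utold : Fin J → V, (∀ i, utold i ∈ Vsub i) →
        E j wj (∑ i, utold i) = Et j (utold j + wj) utold)
    -- PSC iterates
    (u : ℕ → V) (w : ℕ → Fin J → V)
    (hw : ∀ (n : ℕ) (j : Fin J), w (n + 1) j ∈ Vsub j ∧
      ∀ y ∈ Vsub j, E j (w (n + 1) j) (u n) ≤ E j y (u n))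
    (hu : ∀ n : ℕ, u (n + 1) = u n + τ • ∑ j, w (n + 1) j)
    -- relaxed block Jacobi iterates
    (ut : ℕ → Fin J → V) (uhat : ℕ → Fin J → V)
    (hut0 : ∀ j, ut 0 j ∈ Vsub j)
    (huhat : ∀ (n : ℕ) (j : Fin J), uhat (n + 1) j ∈ Vsub j ∧
      ∀ y ∈ Vsub j, Et j (uhat (n + 1) j) (ut n) ≤ Et j y (ut n))
    (hutrec : ∀ (n : ℕ) (j : Fin J), ut (n + 1) j = (1 - τ) • ut n j + τ • uhat (n + 1) j)
    -- identical initialization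
    (hinit : u 0 = ∑ j, ut 0 j) :
    ∀ n : ℕ, 1 ≤ n → u n = ∑ j, ut n j := by

  suffices h : ∀ n : ℕ, u n = ∑ j, ut n j ∧ ∀ j, ut n j ∈ Vsub j by
    intro n _; exact (h n).1
  intro n
  induction n with
  | zero => exact ⟨hinit, hut0⟩
  | succ n ih =>
    obtain ⟨hun, hmem⟩ := ih
    have hhat : ∀ j, uhat (n + 1) j = ut n j + w (n + 1) j := by
      intro j
      obtain ⟨hwmem, hwmin⟩ := hw n j
      obtain ⟨x, hx, huniq⟩ := hEtuniq j (ut n)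
      have h1 : uhat (n + 1) j = x := huniq _ (huhat n j)
      have h2 : ut n j + w (n + 1) j = x := by
        apply huniq
        constructor
        · exact (Vsub j).add_mem (hmem j) hwmem
        · intro y hy
          have hc1 : Et j (ut n j + w (n + 1) j) (ut n) = E j (w (n + 1) j) (u n) := by
            rw [hun]; exact (hcompat j _ hwmem (ut n) hmem).symm
          have hc2 : Et j y (ut n) = E j (y - ut n j) (u n) := by
            have : ut n j + (y - ut n j) = y := by abel
            rw [hun, hcompat j _ ((Vsub j).sub_mem hy (hmem j)) (ut n) hmem, this]
          rw [hc1, hc2]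
          exact hwmin _ ((Vsub j).sub_mem hy (hmem j))
      rw [h1, ← h2]
    constructor
    · rw [hu n, hun]
      have : ∀ j ∈ Finset.univ, ut (n + 1) j = ut n j + τ • w (n + 1) j := by
        intro j _
        rw [hutrec n j, hhat j, smul_add, sub_smul, one_smul]; abel
      rw [Finset.sum_congr rfl this, Finset.sum_add_distrib, ← Finset.smul_sum]
    · intro j
      rw [hutrec n j, hhat j]
      exact (Vsub j).add_mem ((Vsub j).smul_mem _ (hmem j))
        ((Vsub j).smul_mem _ ((Vsub j).add_mem (hmem j) ((hw n j).1)))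
end
end

section
/- Under the compatibility assumption E_j(w_j; u₁ + ⋯ + u_J) = Ẽ_j(u_j + w_j; (u₁, …, u_J)) for all w_j ∈ V_j and (u₁, …, u_J) ∈ Ṽ, the successive subspace correction method is equivalent to the block Gauss–Seidel method: if u^{(0)} = Σ_{j=1}^J u_j^{(0)}, then the intermediate iterates satisfy u^{(n,j)} = Σ_{i=1}^{j} u_i^{(n+1)} + Σ_{i=j+1}^{J} u_i^{(n)} for all n ≥ 0 and 1 ≤ j ≤ J; in particular u^{(n)} = Σ_{j=1}^J u_j^{(n)} for all n ≥ 1. -/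
open scoped RealInnerProductSpace

noncomputable section

/-- Theorem 3.4(b). Under the compatibility assumption
`E_j(w_j; u₁ + ⋯ + u_J) = Ẽ_j(u_j + w_j; (u₁, …, u_J))`, the successive subspace correction
method (SSC) is equivalent to the block Gauss–Seidel method: if `u⁽⁰⁾ = Σⱼ uⱼ⁽⁰⁾`, then the
intermediate iterates satisfy `u⁽ⁿ'ʲ⁾ = Σ_{i ≤ j} uᵢ⁽ⁿ⁺¹⁾ + Σ_{i > j} uᵢ⁽ⁿ⁾`, and in
particular `u⁽ⁿ⁾ = Σⱼ uⱼ⁽ⁿ⁾` for all `n ≥ 1`. -/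
theorem ssc_eq_block_gauss_seidel
    {V : Type*} [NormedAddCommGroup V] [InnerProductSpace ℝ V] [FiniteDimensional ℝ V]
    (J : ℕ) (Vsub : Fin J → Submodule ℝ V)
    -- space decomposition `V = V₁ + ⋯ + V_J`
    (hdecomp : ∀ u : V, ∃ w : Fin J → V, (∀ j, w j ∈ Vsub j) ∧ u = ∑ j, w j)
    -- local energies `E j w u = E_j(w; u)` and `Et j x ũ = Ẽ_j(x; ũ)`
    (E : Fin J → V → V → ℝ) (Et : Fin J → V → (Fin J → V) → ℝ)
    -- each local problem admits a unique minimizer over the corresponding subspace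
    (hEuniq : ∀ (j : Fin J) (uold : V),
      ∃! x : V, x ∈ Vsub j ∧ ∀ y ∈ Vsub j, E j x uold ≤ E j y uold)
    (hEtuniq : ∀ (j : Fin J) (utold : Fin J → V),
      ∃! x : V, x ∈ Vsub j ∧ ∀ y ∈ Vsub j, Et j x utold ≤ Et j y utold)
    -- compatibility assumption
    (hcompat : ∀ (j : Fin J) (wj : V), wj ∈ Vsub j →
      ∀ utold : Fin J → V, (∀ i, utold i ∈ Vsub i) →
        E j wj (∑ i, utold i) = Et j (utold j + wj) utold)
    -- SSC iterates: `u n j` is the intermediate iterate `u⁽ⁿ⁺ʲᐟᴶ⁾`, for `0 ≤ j ≤ J`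
    (u : ℕ → ℕ → V) (w : ℕ → Fin J → V)
    (hw : ∀ (n : ℕ) (j : Fin J), w (n + 1) j ∈ Vsub j ∧
      ∀ y ∈ Vsub j, E j (w (n + 1) j) (u n j.1) ≤ E j y (u n j.1))
    (hurec : ∀ (n : ℕ) (j : Fin J), u n (j.1 + 1) = u n j.1 + w (n + 1) j)
    (huchain : ∀ n : ℕ, u (n + 1) 0 = u n J)
    -- block Gauss–Seidel iterates
    (ut : ℕ → Fin J → V)
    (hut0 : ∀ j, ut 0 j ∈ Vsub j)
    (hut : ∀ (n : ℕ) (j : Fin J), ut (n + 1) j ∈ Vsub j ∧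
      ∀ y ∈ Vsub j,
        Et j (ut (n + 1) j) (fun i => if i < j then ut (n + 1) i else ut n i) ≤
          Et j y (fun i => if i < j then ut (n + 1) i else ut n i))
    -- identical initialization
    (hinit : u 0 0 = ∑ j, ut 0 j) :
    (∀ (n : ℕ) (j : ℕ), j ≤ J →
      u n j = (∑ i ∈ Finset.univ.filter (fun i : Fin J => (i : ℕ) < j), ut (n + 1) i) +
        ∑ i ∈ Finset.univ.filter (fun i : Fin J => j ≤ (i : ℕ)), ut n i) ∧
      ∀ n : ℕ, 1 ≤ n → u n 0 = ∑ j, ut n j := by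

  classical
  have hsplit : ∀ (j : ℕ) (a b : Fin J → V),
      (∑ i ∈ Finset.univ.filter (fun i : Fin J => (i : ℕ) < j), a i) +
        ∑ i ∈ Finset.univ.filter (fun i : Fin J => j ≤ (i : ℕ)), b i =
      ∑ i : Fin J, if (i : ℕ) < j then a i else b i := by
    intro j a b
    rw [Finset.sum_ite]
    congr 1
    apply Finset.sum_congr
    · apply Finset.filter_congr; intro i _; simp [not_lt]
    · intros; rfl
  have key : ∀ n : ℕ, u n 0 = ∑ j, ut n j →
      ∀ j : ℕ, j ≤ J →
        u n j = ∑ i : Fin J, if (i : ℕ) < j then ut (n + 1) i else ut n i := by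
    intro n h0 j
    induction j with
    | zero => intro _; simpa using h0
    | succ j ih =>
      intro hj
      have hjJ : j < J := hj
      set jf : Fin J := ⟨j, hjJ⟩ with hjf
      have huj := ih (le_of_lt hjJ)
      set utold : Fin J → V := fun i => if (i : ℕ) < j then ut (n + 1) i else ut n i
        with hutold
      have hmem : ∀ i, utold i ∈ Vsub i := by
        intro i
        by_cases h : (i : ℕ) < j
        · simpa [utold, h] using (hut n i).1
        · simp only [utold, if_neg h]
          cases n with
          | zero => exact hut0 i
          | succ m => exact (hut m i).1
      have hujf : utold jf = ut n jf := if_neg (lt_irrefl j)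
      have hsum : ∑ i, utold i = u n j := huj.symm
      have hwmem := (hw n jf).1
      have hwmin := (hw n jf).2
      have hutold_eq : (fun i => if i < jf then ut (n + 1) i else ut n i) = utold := by
        funext i; exact if_congr Fin.lt_def rfl rfl
      have hx : (ut n jf + w (n + 1) jf) ∈ Vsub jf ∧
          ∀ y ∈ Vsub jf, Et jf (ut n jf + w (n + 1) jf) utold ≤ Et jf y utold := by
        constructor
        · exact (Vsub jf).add_mem (by simpa [hujf] using hmem jf) hwmem
        · intro y hy
          have h1 : E jf (w (n + 1) jf) (∑ i, utold i) =
              Et jf (utold jf + w (n + 1) jf) utold :=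
            hcompat jf _ hwmem utold hmem
          have hy' : y - utold jf ∈ Vsub jf := (Vsub jf).sub_mem hy (by simpa [hujf] using hmem jf)
          have h2 : E jf (y - utold jf) (∑ i, utold i) =
              Et jf (utold jf + (y - utold jf)) utold :=
            hcompat jf _ hy' utold hmem
          have hle := hwmin (y - utold jf) hy'
          rw [hsum] at h1 h2
          calc Et jf (ut n jf + w (n + 1) jf) utold
              = E jf (w (n + 1) jf) (u n j) := by rw [h1, hujf]
            _ ≤ E jf (y - utold jf) (u n j) := hle
            _ = Et jf y utold := by rw [h2]; congr 1; abel
      have hx' : ut (n + 1) jf ∈ Vsub jf ∧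
          ∀ y ∈ Vsub jf, Et jf (ut (n + 1) jf) utold ≤ Et jf y utold := by
        have := hut n jf
        rwa [hutold_eq] at this
      have hweq : ut n jf + w (n + 1) jf = ut (n + 1) jf :=
        (hEtuniq jf utold).unique hx hx'
      have hrec := hurec n jf
      simp only [hjf] at hrec
      rw [hrec, huj]
      rw [← Finset.sum_erase_add _ _ (Finset.mem_univ jf),
        ← Finset.sum_erase_add _ (fun i : Fin J => if (i : ℕ) < j + 1 then ut (n + 1) i else ut n i)
          (Finset.mem_univ jf)]
      rw [add_assoc]
      congr 1
      · apply Finset.sum_congr rfl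
        intro i hi
        have hne : i ≠ jf := Finset.ne_of_mem_erase hi
        have hne' : (i : ℕ) ≠ j := fun h => hne (Fin.ext h)
        have hiff : (i : ℕ) < j + 1 ↔ (i : ℕ) < j := by omega
        simp [utold, hiff]
      · exact (congrArg (· + w (n + 1) jf) hujf).trans (hweq.trans (if_pos (Nat.lt_succ_self j)).symm)
  have hbase : ∀ n : ℕ, u n 0 = ∑ j, ut n j := by
    intro n
    induction n with
    | zero => exact hinit
    | succ m ihm =>
      rw [huchain m, key m ihm J le_rfl]
      apply Finset.sum_congr rfl
      intro i _
      simp [i.isLt]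
  constructor
  · intro n j hj
    rw [hsplit]
    exact key n (hbase n) j hj
  · intro n _
    exact hbase n
end
end

section
/- The von Neumann alternating projection algorithm is a dualization of the successive subspace correction method applied to the dual problem min{½‖p − f̄‖² : p ∈ V₁ + ⋯ + V_J}: the two sequences satisfy u^{(n,j)} = f − p^{(n,j)} for all n ≥ 0 and 0 ≤ j ≤ J. -/
open scoped RealInnerProductSpace

noncomputable section

private lemma min_inner_zero {V : Type*} [NormedAddCommGroup V] [InnerProductSpace ℝ V]
    {K : Submodule ℝ V} {w x : V} (hx : x ∈ K)
    (hmin : ∀ y ∈ K, ‖x - w‖ ≤ ‖y - w‖) : ∀ m ∈ K, ⟪w - x, m⟫ = 0 := by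
  have h : ‖w - x‖ = ⨅ z : K, ‖w - z‖ := by
    apply le_antisymm
    · apply le_ciInf
      intro z
      rw [norm_sub_rev, norm_sub_rev w z]
      exact hmin z z.2
    · exact ciInf_le ⟨0, fun a ⟨z, hz⟩ => hz ▸ norm_nonneg _⟩ (⟨x, hx⟩ : K)
  exact (Submodule.norm_eq_iInf_iff_real_inner_eq_zero K hx).1 h

/-- Theorem 4.1. The von Neumann alternating projection algorithm for
projecting `f` onto the intersection of the affine subspaces `K_j = M_j + {ū}` is a
dualization of the successive subspace correction method applied to the dual problem
`min { ½‖p − f̄‖² : p ∈ V₁ + ⋯ + V_J }` with `V_j = M_jᗮ` and `f̄ = f − ū`: the two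
sequences satisfy `u⁽ⁿ'ʲ⁾ = f − p⁽ⁿ'ʲ⁾` for all `n ≥ 0` and `0 ≤ j ≤ J`. -/
theorem von_neumann_is_dualization_of_ssc
    {V : Type*} [NormedAddCommGroup V] [InnerProductSpace ℝ V] [FiniteDimensional ℝ V]
    (J : ℕ) (M : Fin J → Submodule ℝ V) (ubar f : V)
    -- the affine subspaces `K_j = M_j + {ū}`
    (K : Fin J → Set V) (hK : ∀ j, K j = {x : V | x - ubar ∈ M j})
    -- von Neumann iterates: `u n j` is `u⁽ⁿ'ʲ⁾` for `0 ≤ j ≤ J`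
    (u : ℕ → ℕ → V)
    (hu00 : u 0 0 = f)
    (huproj : ∀ (n : ℕ) (j : Fin J), u n (j.1 + 1) ∈ K j ∧
      ∀ k ∈ K j, ‖u n (j.1 + 1) - u n j.1‖ ≤ ‖k - u n j.1‖)
    (huchain : ∀ n : ℕ, u (n + 1) 0 = u n J)
    -- SSC iterates for the dual problem, with `V_j = M_jᗮ` and zero initial guess
    (p : ℕ → ℕ → V) (r : ℕ → Fin J → V)
    (hp00 : p 0 0 = 0)
    (hr : ∀ (n : ℕ) (j : Fin J), r n j ∈ (M j)ᗮ ∧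
      ∀ y ∈ (M j)ᗮ, ‖r n j - ((f - ubar) - p n j.1)‖ ≤ ‖y - ((f - ubar) - p n j.1)‖)
    (hprec : ∀ (n : ℕ) (j : Fin J), p n (j.1 + 1) = p n j.1 + r n j)
    (hpchain : ∀ n : ℕ, p (n + 1) 0 = p n J) :
    ∀ (n : ℕ) (j : ℕ), j ≤ J → u n j = f - p n j := by
  -- one-step lemma
  have step : ∀ (n : ℕ) (j : Fin J), u n j.1 = f - p n j.1 → u n (j.1 + 1) = f - p n (j.1 + 1) := by
    intro n j hind
    set v : V := u n j.1 with hv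
    set x : V := u n (j.1 + 1) with hx
    set rr : V := r n j with hrr
    obtain ⟨hxK, hxmin⟩ := huproj n j
    obtain ⟨hrmem, hrmin⟩ := hr n j
    -- under the induction hypothesis, `(f - ubar) - p n j = v - ubar`
    have hfp : (f - ubar) - p n j.1 = v - ubar := by rw [hind]; abel
    -- characterization of `x`: `x - ubar ∈ M j` and `v - x ∈ (M j)ᗮ`
    have hxM : x - ubar ∈ M j := by rw [hK] at hxK; exact hxK
    have hxperp : v - x ∈ (M j)ᗮ := by
      intro m hm
      have key := min_inner_zero (K := M j) (w := v - ubar) (x := x - ubar) hxM ?_ m hm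
      · have e : (v - ubar) - (x - ubar) = v - x := by abel
        rw [e] at key
        rw [real_inner_comm]; exact key
      · intro y hy
        have hyK : y + ubar ∈ K j := by rw [hK]; simpa using hy
        have h1 := hxmin (y + ubar) hyK
        have e1 : (x - ubar) - (v - ubar) = x - v := by abel
        have e2 : y - (v - ubar) = (y + ubar) - v := by abel
        rw [e1, e2]; exact h1
    -- the candidate `v - rr` satisfies the same characterization
    have hyM : (v - rr) - ubar ∈ M j := by
      have hperp : (v - ubar) - rr ∈ ((M j)ᗮ)ᗮ := by
        intro m hm
        rw [real_inner_comm]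
        exact min_inner_zero (K := (M j)ᗮ) (w := v - ubar) (x := rr) hrmem
          (fun y hy => hfp ▸ hrmin y hy) m hm
      rw [Submodule.orthogonal_orthogonal] at hperp
      have e : (v - ubar) - rr = (v - rr) - ubar := by abel
      rwa [e] at hperp
    have hyperp : v - (v - rr) ∈ (M j)ᗮ := by
      have e : v - (v - rr) = rr := by abel
      rwa [e]
    -- uniqueness: the difference lies in `M j ⊓ (M j)ᗮ = ⊥`
    have hdM : x - (v - rr) ∈ M j := by
      have := (M j).sub_mem hxM hyM
      have e : (x - ubar) - ((v - rr) - ubar) = x - (v - rr) := by abel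
      rwa [e] at this
    have hdP : x - (v - rr) ∈ (M j)ᗮ := by
      have := ((M j)ᗮ).sub_mem hyperp hxperp
      have e : (v - (v - rr)) - (v - x) = x - (v - rr) := by abel
      rwa [e] at this
    have hzero : x - (v - rr) = 0 := by
      have := (M j).inner_right_of_mem_orthogonal hdM hdP
      have h2 : ⟪x - (v - rr), x - (v - rr)⟫ = 0 := this
      exact inner_self_eq_zero.1 h2
    have hxeq : x = v - rr := by
      have := sub_eq_zero.1 hzero
      exact this
    rw [hxeq, hprec n j, hind, hrr]
    abel
  -- inner induction over j, for a fixed n with correct start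
  have inner : ∀ (n : ℕ), u n 0 = f - p n 0 → ∀ j : ℕ, j ≤ J → u n j = f - p n j := by
    intro n h0 j
    induction j with
    | zero => intro _; exact h0
    | succ k ih =>
      intro hk
      have hkJ : k < J := hk
      exact step n ⟨k, hkJ⟩ (ih (le_of_lt hkJ))
  -- outer induction over n
  intro n
  induction n with
  | zero =>
    exact inner 0 (by rw [hu00, hp00]; abel)
  | succ m ih =>
    apply inner (m + 1)
    rw [huchain m, hpchain m]
    exact ih J le_rfl
end
end

section
/- The Dykstra algorithm is a dualization of the successive subspace correction method applied to the dual problem min_{(p₁,…,p_J)∈V^J} ½‖Σ_j p_j − f‖² + Σ_j σ_{K_j}(p_j): for all n ≥ 1, u^{(n)} = f − Σ_{j=1}^J p_j^{(n)} and q_j^{(n)} = p_j^{(n)} for every 1 ≤ j ≤ J. -/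
open scoped RealInnerProductSpace

noncomputable section

/-- The support function of a set. -/
def suppFn {E : Type*} [NormedAddCommGroup E] [InnerProductSpace ℝ E]
    (K : Set E) (p : E) : EReal :=
  ⨆ u : K, ((⟪p, (u : E)⟫ : ℝ) : EReal)

lemma dyk_key {V : Type*} [NormedAddCommGroup V] [InnerProductSpace ℝ V]
    (K : Set V) (hconv : Convex ℝ K) (v π : V) (hπK : π ∈ K)
    (hmin : ∀ k ∈ K, ‖π - v‖ ≤ ‖k - v‖) (ps : V)
    (hps : ∀ pj : V, ((1/2 * ‖ps - v‖^2 : ℝ) : EReal) + suppFn K ps ≤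
           ((1/2 * ‖pj - v‖^2 : ℝ) : EReal) + suppFn K pj) :
    ps = v - π := by
  -- variational inequality
  have hne : Nonempty K := ⟨⟨π, hπK⟩⟩
  have hproj : ‖v - π‖ = ⨅ w : K, ‖v - (w : V)‖ := by
    have h1 : ‖v - π‖ ≤ ⨅ w : K, ‖v - (w : V)‖ := by
      refine le_ciInf fun w => ?_
      rw [norm_sub_rev v, norm_sub_rev v]
      exact hmin w w.2
    have h2 : (⨅ w : K, ‖v - (w : V)‖) ≤ ‖v - π‖ :=
      ciInf_le ⟨0, by rintro x ⟨w, rfl⟩; exact norm_nonneg _⟩ (⟨π, hπK⟩ : K)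
    exact le_antisymm h1 h2
  have hvar : ∀ k ∈ K, ⟪v - π, k - π⟫ ≤ 0 :=
    (norm_eq_iInf_iff_real_inner_le_zero hconv hπK).mp hproj
  set φ := v - π with hφ
  have hφk : ∀ k ∈ K, ⟪φ, k⟫ ≤ ⟪φ, π⟫ := by
    intro k hk
    have := hvar k hk
    rw [inner_sub_right] at this
    linarith
  -- support function at φ
  have hsupp : suppFn K φ = ((⟪φ, π⟫ : ℝ) : EReal) := by
    refine le_antisymm (iSup_le fun w => ?_) ?_
    · exact EReal.coe_le_coe_iff.mpr (hφk w w.2)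
    · exact le_iSup_of_le (⟨π, hπK⟩ : K) le_rfl
  -- compare values
  have hkey := hps φ
  rw [hsupp] at hkey
  have hφv : ‖φ - v‖ = ‖π‖ := by rw [hφ]; rw [show v - π - v = -π by abel, norm_neg]
  rw [hφv] at hkey
  have hle : suppFn K ps ≥ ((⟪ps, π⟫ : ℝ) : EReal) := le_iSup_of_le (⟨π, hπK⟩ : K) le_rfl
  have hchain : ((1/2 * ‖ps - v‖^2 + ⟪ps, π⟫ : ℝ) : EReal) ≤
      ((1/2 * ‖π‖^2 + ⟪φ, π⟫ : ℝ) : EReal) := by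
    rw [EReal.coe_add, EReal.coe_add]
    exact le_trans (add_le_add le_rfl hle) hkey
  have hreal : 1/2 * ‖ps - v‖^2 + ⟪ps, π⟫ ≤ 1/2 * ‖π‖^2 + ⟪φ, π⟫ :=
    EReal.coe_le_coe_iff.mp hchain
  -- strong convexity identity
  have hexp : ‖ps - φ‖^2 = ‖ps - v‖^2 + 2 * ⟪ps, π⟫ - 2 * ⟪v, π⟫ + ‖π‖^2 := by
    have h1 : ps - φ = (ps - v) + π := by rw [hφ]; abel
    rw [h1, norm_add_sq_real, inner_sub_left]
    ring
  have hφπ : ⟪φ, π⟫ = ⟪v, π⟫ - ‖π‖^2 := by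
    rw [hφ, inner_sub_left, real_inner_self_eq_norm_sq]
  have hsq : ‖ps - φ‖^2 ≤ 0 := by rw [hexp]; rw [hφπ] at hreal; linarith
  have : ‖ps - φ‖ = 0 := by nlinarith [norm_nonneg (ps - φ)]
  have := norm_sub_eq_zero_iff.mp this
  rw [this, hφ]

/-- Theorem 4.3. The Dykstra algorithm for projecting `f` onto the
intersection of closed convex sets `K₁, …, K_J` is a dualization of the successive subspace
correction (block Gauss–Seidel) method applied to the dual problem
`min ½‖Σⱼ pⱼ − f‖² + Σⱼ σ_{Kⱼ}(pⱼ)`: for all `n ≥ 1`, `u⁽ⁿ⁾ = f − Σⱼ pⱼ⁽ⁿ⁾` and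
`qⱼ⁽ⁿ⁾ = pⱼ⁽ⁿ⁾` for every `j`. -/
theorem dykstra_is_dualization_of_ssc
    {V : Type*} [NormedAddCommGroup V] [InnerProductSpace ℝ V] [FiniteDimensional ℝ V]
    (J : ℕ) (K : Fin J → Set V)
    (hK : ∀ j, (K j).Nonempty ∧ IsClosed (K j) ∧ Convex ℝ (K j))
    (f : V)
    -- Dykstra iterates: `u n j` is `u⁽ⁿ'ʲ⁾` for `0 ≤ j ≤ J`, `u⁽ⁿ⁾ = u n 0`
    (u : ℕ → ℕ → V) (q : ℕ → Fin J → V)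
    (hu00 : u 0 0 = f) (hq0 : ∀ j, q 0 j = 0)
    (huproj : ∀ (n : ℕ) (j : Fin J), u n (j.1 + 1) ∈ K j ∧
      ∀ k ∈ K j, ‖u n (j.1 + 1) - (u n j.1 + q n j)‖ ≤ ‖k - (u n j.1 + q n j)‖)
    (hqrec : ∀ (n : ℕ) (j : Fin J), q (n + 1) j = q n j + u n j.1 - u n (j.1 + 1))
    (huchain : ∀ n : ℕ, u (n + 1) 0 = u n J)
    -- SSC (block Gauss–Seidel) iterates for the dual problem, with zero initial guess
    (p : ℕ → Fin J → V)
    (hp0 : ∀ j, p 0 j = 0)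
    (hpmin : ∀ (n : ℕ) (j : Fin J), ∀ pj : V,
      ((1 / 2 * ‖p (n + 1) j + ((∑ i ∈ Finset.univ.filter (· < j), p (n + 1) i) +
          ∑ i ∈ Finset.univ.filter (j < ·), p n i) - f‖ ^ 2 : ℝ) : EReal) +
        suppFn (K j) (p (n + 1) j) ≤
      ((1 / 2 * ‖pj + ((∑ i ∈ Finset.univ.filter (· < j), p (n + 1) i) +
          ∑ i ∈ Finset.univ.filter (j < ·), p n i) - f‖ ^ 2 : ℝ) : EReal) +
        suppFn (K j) pj) :
    ∀ n : ℕ, 1 ≤ n → u n 0 = f - ∑ j, p n j ∧ ∀ j, q n j = p n j := by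
  have main : ∀ n : ℕ, u n 0 = f - ∑ i, p n i ∧ ∀ i, q n i = p n i := by
    intro n
    induction n with
    | zero =>
      constructor
      · simp [hu00, hp0]
      · intro i; rw [hq0 i, hp0 i]
    | succ n ih =>
      obtain ⟨ihu, ihq⟩ := ih
      have inner : ∀ j : ℕ, j ≤ J →
          u n j = f - ((∑ i ∈ Finset.univ.filter (fun i : Fin J => i.1 < j), p (n+1) i) +
            ∑ i ∈ Finset.univ.filter (fun i : Fin J => j ≤ i.1), p n i) ∧
          ∀ i : Fin J, i.1 < j → q (n+1) i = p (n+1) i := by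
        intro j
        induction j with
        | zero =>
          intro _
          constructor
          · have e1 : Finset.univ.filter (fun i : Fin J => i.1 < 0) = ∅ := by
              ext i; simp
            have e2 : Finset.univ.filter (fun i : Fin J => 0 ≤ i.1) = Finset.univ := by
              ext i; simp
            rw [e1, e2, Finset.sum_empty, zero_add]
            exact ihu
          · intro i hi; exact absurd hi (Nat.not_lt_zero _)
        | succ j ihj =>
          intro hj1
          have hjJ : j < J := hj1
          obtain ⟨ihu', ihq'⟩ := ihj (Nat.le_of_succ_le hj1)
          obtain ⟨hKne, hKcl, hKconv⟩ := hK ⟨j, hjJ⟩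
          have hsplit1 : (Finset.univ.filter (fun i : Fin J => i.1 < j + 1)) =
              insert ⟨j, hjJ⟩ (Finset.univ.filter (fun i : Fin J => i.1 < j)) := by
            ext i; simp [Fin.ext_iff]; omega
          have hnot1 : (⟨j, hjJ⟩ : Fin J) ∉
              Finset.univ.filter (fun i : Fin J => i.1 < j) := by simp
          have hsplit2 : (Finset.univ.filter (fun i : Fin J => j ≤ i.1)) =
              insert ⟨j, hjJ⟩ (Finset.univ.filter (fun i : Fin J => j + 1 ≤ i.1)) := by
            ext i; simp [Fin.ext_iff]; omega
          have hnot2 : (⟨j, hjJ⟩ : Fin J) ∉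
              Finset.univ.filter (fun i : Fin J => j + 1 ≤ i.1) := by simp
          set A := ∑ i ∈ Finset.univ.filter (fun i : Fin J => i.1 < j), p (n+1) i with hA
          set B := ∑ i ∈ Finset.univ.filter (fun i : Fin J => j + 1 ≤ i.1), p n i with hB
          have hf1 : ∑ i ∈ Finset.univ.filter (· < (⟨j, hjJ⟩ : Fin J)), p (n+1) i = A := by
            rw [hA]
            apply Finset.sum_congr _ (fun _ _ => rfl)
            ext i; simp [Fin.lt_def]
          have hf2 : ∑ i ∈ Finset.univ.filter ((⟨j, hjJ⟩ : Fin J) < ·), p n i = B := by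
            rw [hB]
            apply Finset.sum_congr _ (fun _ _ => rfl)
            ext i; simp [Fin.lt_def]
          -- u n j in terms of A, B
          have hunj : u n j = (f - (A + B)) - p n ⟨j, hjJ⟩ := by
            rw [ihu', hsplit2, Finset.sum_insert hnot2, ← hB]
            abel
          have huqv : u n j + q n ⟨j, hjJ⟩ = f - (A + B) := by
            rw [hunj, ihq ⟨j, hjJ⟩]; abel
          have hup1 : u n (j+1) ∈ K ⟨j, hjJ⟩ := (huproj n ⟨j, hjJ⟩).1
          have hup2 : ∀ k ∈ K ⟨j, hjJ⟩,
              ‖u n (j+1) - (u n j + q n ⟨j, hjJ⟩)‖ ≤ ‖k - (u n j + q n ⟨j, hjJ⟩)‖ :=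
            (huproj n ⟨j, hjJ⟩).2
          have hmin' : ∀ k ∈ K ⟨j, hjJ⟩,
              ‖u n (j+1) - (f - (A + B))‖ ≤ ‖k - (f - (A + B))‖ := by
            intro k hk
            have h := hup2 k hk
            rwa [huqv] at h
          have hps' : ∀ pj : V,
              ((1/2 * ‖p (n+1) ⟨j, hjJ⟩ - (f - (A + B))‖^2 : ℝ) : EReal) +
                suppFn (K ⟨j, hjJ⟩) (p (n+1) ⟨j, hjJ⟩) ≤
              ((1/2 * ‖pj - (f - (A + B))‖^2 : ℝ) : EReal) +
                suppFn (K ⟨j, hjJ⟩) pj := by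
            intro pj
            have h := hpmin n ⟨j, hjJ⟩ pj
            rw [hf1, hf2] at h
            have harg : ∀ x : V, x + (A + B) - f = x - (f - (A + B)) := fun x => by abel
            rw [harg, harg] at h
            exact h
          have hpeq : p (n+1) ⟨j, hjJ⟩ = (f - (A + B)) - u n (j+1) :=
            dyk_key _ hKconv _ _ hup1 hmin' _ hps'
          have hqr : q (n+1) ⟨j, hjJ⟩ = q n ⟨j, hjJ⟩ + u n j - u n (j+1) :=
            hqrec n ⟨j, hjJ⟩
          constructor
          · rw [hsplit1, Finset.sum_insert hnot1, ← hA, hpeq]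
            abel
          · intro i hi
            by_cases hij : i.1 < j
            · exact ihq' i hij
            · have heq : i = ⟨j, hjJ⟩ := Fin.ext (show i.1 = j by omega)
              rw [heq, hqr, hunj, ihq ⟨j, hjJ⟩, hpeq]
              abel
      obtain ⟨hJ1, hJ2⟩ := inner J le_rfl
      have e1 : Finset.univ.filter (fun i : Fin J => i.1 < J) = Finset.univ := by
        ext i; simp [i.isLt]
      have e2 : Finset.univ.filter (fun i : Fin J => J ≤ i.1) = ∅ := by
        ext i; simp only [Finset.mem_filter, Finset.mem_univ, true_and,
          Finset.notMem_empty, iff_false]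
        have := i.isLt; omega
      constructor
      · rw [huchain n, hJ1, e1, e2, Finset.sum_empty, add_zero]
      · intro i; exact hJ2 i i.isLt
  intro n _
  exact main n
end
end

section
/- The parallel von Neumann algorithm is a dualization of the parallel subspace correction method applied to the dual problem min{½‖p − f̄‖² : p ∈ V₁ + ⋯ + V_J}: the two sequences satisfy u^{(n)} = f − p^{(n)} for all n ≥ 1. -/
open scoped RealInnerProductSpace

noncomputable section

private lemma min_eq_proj {V : Type*} [NormedAddCommGroup V] [InnerProductSpace ℝ V]
    [FiniteDimensional ℝ V] (S : Submodule ℝ V) (v x : V) (hx : x ∈ S)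
    (hmin : ∀ y ∈ S, ‖x - v‖ ≤ ‖y - v‖) : x = S.starProjection v := by
  have hinf : ‖v - x‖ = ⨅ w : S, ‖v - w‖ := by
    apply le_antisymm
    · apply le_ciInf
      intro w
      rw [norm_sub_rev, norm_sub_rev v w]
      exact hmin w w.2
    · exact ciInf_le ⟨0, fun a ⟨w, hw⟩ => hw ▸ norm_nonneg _⟩ (⟨x, hx⟩ : S)
  have := (Submodule.norm_eq_iInf_iff_inner_eq_zero S hx).mp hinf
  exact (Submodule.eq_starProjection_of_mem_of_inner_eq_zero hx this).symm

/-- Theorem 4.4. The parallel von Neumann algorithm for projecting `f` onto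
the intersection of the affine subspaces `K_j = M_j + {ū}` is a dualization of the parallel
subspace correction method applied to the dual problem
`min { ½‖p − f̄‖² : p ∈ V₁ + ⋯ + V_J }` with `V_j = M_jᗮ` and `f̄ = f − ū`: the two
sequences satisfy `u⁽ⁿ⁾ = f − p⁽ⁿ⁾` for all `n ≥ 1`. -/
theorem parallel_von_neumann_is_dualization_of_psc
    {V : Type*} [NormedAddCommGroup V] [InnerProductSpace ℝ V] [FiniteDimensional ℝ V]
    (J : ℕ) (M : Fin J → Submodule ℝ V) (ubar f : V) (τ : ℝ) (hτ : 0 < τ)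
    -- the affine subspaces `K_j = M_j + {ū}`
    (K : Fin J → Set V) (hK : ∀ j, K j = {x : V | x - ubar ∈ M j})
    -- parallel von Neumann iterates
    (u : ℕ → V) (uj : ℕ → Fin J → V)
    (hu0 : u 0 = f)
    (hujproj : ∀ (n : ℕ) (j : Fin J), uj (n + 1) j ∈ K j ∧
      ∀ k ∈ K j, ‖uj (n + 1) j - u n‖ ≤ ‖k - u n‖)
    (hurec : ∀ n : ℕ, u (n + 1) = (1 - τ * J) • u n + τ • ∑ j, uj (n + 1) j)
    -- PSC iterates for the dual problem, with `V_j = M_jᗮ` and zero initial guess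
    (p : ℕ → V) (r : ℕ → Fin J → V)
    (hp0 : p 0 = 0)
    (hr : ∀ (n : ℕ) (j : Fin J), r (n + 1) j ∈ (M j)ᗮ ∧
      ∀ y ∈ (M j)ᗮ, ‖r (n + 1) j - ((f - ubar) - p n)‖ ≤ ‖y - ((f - ubar) - p n)‖)
    (hprec : ∀ n : ℕ, p (n + 1) = p n + τ • ∑ j, r (n + 1) j) :
    ∀ n : ℕ, 1 ≤ n → u n = f - p n := by
  have key : ∀ n : ℕ, u n = f - p n := by
    intro n
    induction n with
    | zero => simp [hu0, hp0]
    | succ n ih =>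
      have huj : ∀ j, uj (n + 1) j = u n - r (n + 1) j := by
        intro j
        obtain ⟨hmem, hmin⟩ := hujproj n j
        obtain ⟨hrmem, hrmin⟩ := hr n j
        have hfp : (f - ubar) - p n = u n - ubar := by rw [ih]; abel
        -- uj - ubar is the projection of (u n - ubar) onto M j
        have h1 : uj (n + 1) j - ubar = (M j).starProjection (u n - ubar) := by
          apply min_eq_proj
          · have := hmem; rwa [hK j] at this
          · intro y hy
            have : y + ubar ∈ K j := by rw [hK j]; simpa using hy
            have := hmin (y + ubar) this
            have e1 : uj (n + 1) j - ubar - (u n - ubar) = uj (n + 1) j - u n := by abel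
            have e2 : y + ubar - u n = y - (u n - ubar) := by abel
            rw [e1, ← e2]; exact this
        have h2 : r (n + 1) j = (M j)ᗮ.starProjection (u n - ubar) := by
          apply min_eq_proj _ _ _ hrmem
          intro y hy
          rw [← hfp]; exact hrmin y hy
        have h3 := Submodule.starProjection_add_starProjection_orthogonal (K := M j) (u n - ubar)
        rw [← h1, ← h2] at h3
        have : uj (n + 1) j - ubar + r (n + 1) j = u n - ubar := h3
        have := congrArg (· + ubar - r (n + 1) j) this
        simpa using by linear_combination (norm := abel) this
      rw [hurec n, hprec n, ih]
      have : ∑ j, uj (n + 1) j = (J : ℝ) • u n - ∑ j, r (n + 1) j := by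
        rw [Finset.sum_congr rfl (fun j _ => huj j), Finset.sum_sub_distrib]
        simp [Finset.sum_const, Nat.cast_smul_eq_nsmul ℝ]
      rw [this, ih]
      simp only [smul_sub, sub_smul, smul_smul]
      module
  intro n _
  exact key n
end
end

section
/- The parallel Dykstra algorithm is a dualization of the parallel subspace correction method applied to the dual problem min_{(p₁,…,p_J)∈V^J} ½‖Σ_j p_j − f‖² + Σ_j σ_{K_j}(p_j): for all n ≥ 1, u^{(n)} = f − Σ_{j=1}^J p_j^{(n)} and q_j^{(n)} = p_j^{(n)} for every 1 ≤ j ≤ J. -/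
open scoped RealInnerProductSpace

noncomputable section

/-- Variational characterization of a metric projection onto a convex set. -/
lemma proj_var_ineq {V : Type*} [NormedAddCommGroup V] [InnerProductSpace ℝ V]
    {K : Set V} (hconv : Convex ℝ K) {w π : V} (hπ : π ∈ K)
    (hmin : ∀ k ∈ K, ‖π - w‖ ≤ ‖k - w‖) :
    ∀ k ∈ K, ⟪w - π, k - π⟫ ≤ 0 := by
  haveI : Nonempty K := ⟨⟨π, hπ⟩⟩
  rw [← norm_eq_iInf_iff_real_inner_le_zero hconv hπ]
  refine le_antisymm (le_ciInf fun k => ?_) (ciInf_le ⟨0, by rintro _ ⟨_, rfl⟩; exact norm_nonneg _⟩ (⟨π, hπ⟩ : K))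
  rw [norm_sub_rev w π, norm_sub_rev w (k : V)]
  exact hmin k k.2

/-- Theorem 4.5. The parallel Dykstra algorithm for projecting `f` onto the
intersection of closed convex sets `K₁, …, K_J` is a dualization of the parallel subspace
correction (relaxed block Jacobi) method applied to the dual problem
`min ½‖Σⱼ pⱼ − f‖² + Σⱼ σ_{Kⱼ}(pⱼ)`: for all `n ≥ 1`, `u⁽ⁿ⁾ = f − Σⱼ pⱼ⁽ⁿ⁾` and
`qⱼ⁽ⁿ⁾ = pⱼ⁽ⁿ⁾` for every `j`. -/
theorem parallel_dykstra_is_dualization_of_psc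
    {V : Type*} [NormedAddCommGroup V] [InnerProductSpace ℝ V] [FiniteDimensional ℝ V]
    (J : ℕ) (K : Fin J → Set V)
    (hK : ∀ j, (K j).Nonempty ∧ IsClosed (K j) ∧ Convex ℝ (K j))
    (f : V) (τ : ℝ) (hτ : 0 < τ)
    -- parallel Dykstra iterates
    (u : ℕ → V) (uj : ℕ → Fin J → V) (q : ℕ → Fin J → V)
    (hu0 : u 0 = f) (hq0 : ∀ j, q 0 j = 0)
    (hujproj : ∀ (n : ℕ) (j : Fin J), uj (n + 1) j ∈ K j ∧
      ∀ k ∈ K j, ‖uj (n + 1) j - (u n + q n j)‖ ≤ ‖k - (u n + q n j)‖)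
    (hqrec : ∀ (n : ℕ) (j : Fin J), q (n + 1) j = q n j + τ • (u n - uj (n + 1) j))
    (hurec : ∀ n : ℕ, u (n + 1) = (1 - τ * J) • u n + τ • ∑ j, uj (n + 1) j)
    -- PSC (relaxed block Jacobi) iterates for the dual problem, with zero initial guess
    (p : ℕ → Fin J → V) (phat : ℕ → Fin J → V)
    (hp0 : ∀ j, p 0 j = 0)
    (hphatmin : ∀ (n : ℕ) (j : Fin J), ∀ pj : V,
      ((1 / 2 * ‖phat (n + 1) j + (∑ i ∈ Finset.univ.filter (· ≠ j), p n i) - f‖ ^ 2 : ℝ) :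
          EReal) + suppFn (K j) (phat (n + 1) j) ≤
      ((1 / 2 * ‖pj + (∑ i ∈ Finset.univ.filter (· ≠ j), p n i) - f‖ ^ 2 : ℝ) : EReal) +
        suppFn (K j) pj)
    (hprec : ∀ (n : ℕ) (j : Fin J), p (n + 1) j = (1 - τ) • p n j + τ • phat (n + 1) j) :
    ∀ n : ℕ, 1 ≤ n → u n = f - ∑ j, p n j ∧ ∀ j, q n j = p n j := by
  suffices h : ∀ n : ℕ, u n = f - ∑ j, p n j ∧ ∀ j, q n j = p n j from fun n _ => h n
  intro n
  induction n with
  | zero => simp [hu0, hq0, hp0]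
  | succ n ih =>
    obtain ⟨ihu, ihq⟩ := ih
    -- the key identification: phat (n+1) j = (u n + q n j) - uj (n+1) j
    have key : ∀ j : Fin J, phat (n + 1) j = (u n + q n j) - uj (n + 1) j := by
      intro j
      obtain ⟨hπK, hπmin⟩ := hujproj n j
      set w : V := u n + q n j with hwdef
      set π : V := uj (n + 1) j with hπdef
      have hvar : ∀ k ∈ K j, ⟪w - π, k - π⟫ ≤ 0 :=
        proj_var_ineq (hK j).2.2 hπK hπmin
      -- rewrite the shifted sum
      have hwa : ∀ x : V, x + (∑ i ∈ Finset.univ.filter (· ≠ j), p n i) - f = x - w := by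
        intro x
        rw [Finset.filter_ne', Finset.sum_erase_eq_sub (Finset.mem_univ j), hwdef, ihq j, ihu]
        abel
      -- support function value at w - π
      have hsupp : suppFn (K j) (w - π) = ((⟪w - π, π⟫ : ℝ) : EReal) := by
        refine le_antisymm (iSup_le fun k => ?_) (le_iSup_of_le ⟨π, hπK⟩ le_rfl)
        rw [EReal.coe_le_coe_iff]
        have h1 := hvar k k.2
        rw [inner_sub_right] at h1
        linarith
      -- the quadratic identity
      have hident : ∀ pj : V, (1 / 2 * ‖pj - w‖ ^ 2 + ⟪pj, π⟫ : ℝ) =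
          1 / 2 * ‖w - π - w‖ ^ 2 + ⟪w - π, π⟫ + 1 / 2 * ‖pj - (w - π)‖ ^ 2 := by
        intro pj
        have e0 : (pj - (w - π)) + (w - π - w) = pj - w := by abel
        have e1 : ‖pj - w‖ ^ 2 =
            ‖pj - (w - π)‖ ^ 2 + 2 * ⟪pj - (w - π), w - π - w⟫ + ‖w - π - w‖ ^ 2 := by
          rw [← norm_add_sq_real, e0]
        have e2 : ⟪pj - (w - π), w - π - w⟫ = ⟪w - π, π⟫ - ⟪pj, π⟫ := by
          have : w - π - w = -π := by abel
          rw [this, inner_neg_right, inner_sub_left]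
          ring
        rw [e1, e2]; ring
      -- put the minimality hypothesis into the rewritten form
      have hmin' := hphatmin n j (w - π)
      rw [hwa (phat (n + 1) j), hwa (w - π), hsupp] at hmin'
      -- the chain of inequalities
      have hPle : ((⟪phat (n + 1) j, π⟫ : ℝ) : EReal) ≤ suppFn (K j) (phat (n + 1) j) :=
        le_iSup_of_le ⟨π, hπK⟩ le_rfl
      have hchain : ((1 / 2 * ‖w - π - w‖ ^ 2 + ⟪w - π, π⟫
            + 1 / 2 * ‖phat (n + 1) j - (w - π)‖ ^ 2 : ℝ) : EReal) ≤
          ((1 / 2 * ‖w - π - w‖ ^ 2 + ⟪w - π, π⟫ : ℝ) : EReal) := by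
        calc ((1 / 2 * ‖w - π - w‖ ^ 2 + ⟪w - π, π⟫
              + 1 / 2 * ‖phat (n + 1) j - (w - π)‖ ^ 2 : ℝ) : EReal)
            = ((1 / 2 * ‖phat (n + 1) j - w‖ ^ 2 : ℝ) : EReal)
              + ((⟪phat (n + 1) j, π⟫ : ℝ) : EReal) := by
              rw [← EReal.coe_add, ← hident (phat (n + 1) j)]
          _ ≤ ((1 / 2 * ‖phat (n + 1) j - w‖ ^ 2 : ℝ) : EReal)
              + suppFn (K j) (phat (n + 1) j) := add_le_add le_rfl hPle
          _ ≤ ((1 / 2 * ‖w - π - w‖ ^ 2 : ℝ) : EReal) + ((⟪w - π, π⟫ : ℝ) : EReal) := hmin'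
          _ = _ := by rw [← EReal.coe_add]
      rw [EReal.coe_le_coe_iff] at hchain
      have hz : ‖phat (n + 1) j - (w - π)‖ = 0 := by
        have h1 : ‖phat (n + 1) j - (w - π)‖ ^ 2 ≤ 0 := by linarith
        nlinarith [norm_nonneg (phat (n + 1) j - (w - π))]
      have := norm_eq_zero.mp hz
      rw [sub_eq_zero] at this
      exact this
    -- conclude the q part
    have hqp : ∀ j : Fin J, q (n + 1) j = p (n + 1) j := by
      intro j
      rw [hqrec n j, hprec n j, key j, ihq j]
      module
    refine ⟨?_, hqp⟩
    -- conclude the u part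
    have hps : ∀ j : Fin J, p (n + 1) j
        = (1 - τ) • p n j + τ • (u n + p n j - uj (n + 1) j) := by
      intro j
      rw [hprec n j, key j, ihq j]
    have hsum : ∑ j, p (n + 1) j
        = (1 - τ) • (∑ j, p n j)
          + τ • ((J : ℝ) • u n + (∑ j, p n j) - ∑ j, uj (n + 1) j) := by
      rw [Finset.sum_congr rfl fun j _ => hps j, Finset.sum_add_distrib, ← Finset.smul_sum,
        ← Finset.smul_sum, Finset.sum_sub_distrib, Finset.sum_add_distrib,
        Finset.sum_const, Finset.card_univ, Fintype.card_fin, ← Nat.cast_smul_eq_nsmul ℝ]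
    have hpn : (∑ j, p n j) = f - u n := by rw [ihu]; abel
    rw [hurec n, hsum, hpn]
    module
end
end

section
/- The Peaceman–Rachford splitting algorithm for the linear equation (Σ_{j=1}^J A_j + αI)u = f is a dualization of the successive subspace correction method applied to the dual problem min_{(p₁,…,p_J)∈V^J} (1/(2α))‖Σ_j p_j − f‖² + ½ Σ_j ⟨A_j^{-1}p_j, p_j⟩: if the initial data satisfy u^{(−1,j)} = A_j^{-1} p_j^{(0)} for every j = 1, …, J, then p_j^{(n+1)} = A_j u^{(n,j)} for all n ≥ 0 and all j, and consequently u^{(n)} = (1/α)(f − Σ_{j=1}^J p_j^{(n)}) for all n ≥ 1, where u^{(n)} := u^{(n−1,J)}. -/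
open scoped RealInnerProductSpace

noncomputable section

/-- Theorem 5.1. The Peaceman–Rachford splitting algorithm for the linear
equation `(Σⱼ Aⱼ + αI)u = f` is a dualization of the successive subspace correction (block
Gauss–Seidel) method applied to the dual problem
`min (1/(2α))‖Σⱼ pⱼ − f‖² + ½ Σⱼ ⟨Aⱼ⁻¹pⱼ, pⱼ⟩`: if `u⁽⁻¹'ʲ⁾ = Aⱼ⁻¹ pⱼ⁽⁰⁾` for all `j`,
then `pⱼ⁽ⁿ⁺¹⁾ = Aⱼ u⁽ⁿ'ʲ⁾` for all `n ≥ 0` and all `j`, and consequently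
`u⁽ⁿ⁾ = (1/α)(f − Σⱼ pⱼ⁽ⁿ⁾)` for all `n ≥ 1`.
Here `u n j` denotes `u⁽ⁿ⁻¹'ʲ⁺¹⁾` (so `u 0 j` are the initial values `u⁽⁻¹'ʲ⁺¹⁾` and
`u⁽ⁿ⁾ = u n (J−1)`), and `p n j` denotes `pⱼ⁽ⁿ⁾`. -/
theorem peaceman_rachford_is_dualization_of_ssc_linear
    {V : Type*} [NormedAddCommGroup V] [InnerProductSpace ℝ V] [FiniteDimensional ℝ V]
    (J : ℕ) (hJ : 0 < J)
    (A Ainv : Fin J → V →ₗ[ℝ] V)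
    -- the `Aⱼ` are symmetric and positive definite, with inverses `Ainv j`
    (hsym : ∀ (j : Fin J) (x y : V), ⟪A j x, y⟫ = ⟪x, A j y⟫)
    (hpos : ∀ (j : Fin J) (x : V), x ≠ 0 → 0 < ⟪A j x, x⟫)
    (hinv₁ : ∀ (j : Fin J) (x : V), A j (Ainv j x) = x)
    (hinv₂ : ∀ (j : Fin J) (x : V), Ainv j (A j x) = x)
    (α : ℝ) (hα : 0 < α) (f : V)
    -- Peaceman–Rachford iterates: `u⁽ⁿ'ʲ⁾ = (Aⱼ + αI)⁻¹(f − Σ_{i<j} Aᵢu⁽ⁿ'ⁱ⁾ − Σ_{i>j} Aᵢu⁽ⁿ⁻¹'ⁱ⁾)`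
    (u : ℕ → Fin J → V)
    (hu : ∀ (n : ℕ) (j : Fin J),
      A j (u (n + 1) j) + α • u (n + 1) j =
        f - (∑ i ∈ Finset.univ.filter (· < j), A i (u (n + 1) i)) -
          ∑ i ∈ Finset.univ.filter (j < ·), A i (u n i))
    -- SSC iterates: `pⱼ⁽ⁿ⁺¹⁾ = (αAⱼ⁻¹ + I)⁻¹(f − Σ_{i<j} pᵢ⁽ⁿ⁺¹⁾ − Σ_{i>j} pᵢ⁽ⁿ⁾)`
    (p : ℕ → Fin J → V)
    (hp : ∀ (n : ℕ) (j : Fin J),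
      α • Ainv j (p (n + 1) j) + p (n + 1) j =
        f - (∑ i ∈ Finset.univ.filter (· < j), p (n + 1) i) -
          ∑ i ∈ Finset.univ.filter (j < ·), p n i)
    -- initial condition `u⁽⁻¹'ʲ⁾ = Aⱼ⁻¹ pⱼ⁽⁰⁾`
    (hinit : ∀ j : Fin J, u 0 j = Ainv j (p 0 j)) :
    (∀ (n : ℕ) (j : Fin J), p (n + 1) j = A j (u (n + 1) j)) ∧
      ∀ n : ℕ, 1 ≤ n → u n ⟨J - 1, by omega⟩ = (1 / α) • (f - ∑ j, p n j) := by

  have hinj : ∀ (j : Fin J) (x y : V), α • Ainv j x + x = α • Ainv j y + y → x = y := by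
    intro j x y h
    by_contra hne
    have hd : x - y ≠ 0 := sub_ne_zero.mpr hne
    have h0 : α • Ainv j (x - y) + (x - y) = 0 := by
      rw [map_sub, smul_sub]
      rw [show α • Ainv j x - α • Ainv j y + (x - y)
          = (α • Ainv j x + x) - (α • Ainv j y + y) by abel, h, sub_self]
    have hAne : Ainv j (x - y) ≠ 0 := fun hz => hd (by rw [← hinv₁ j (x - y), hz, map_zero])
    have h1 : 0 < ⟪A j (Ainv j (x - y)), Ainv j (x - y)⟫ := hpos j _ hAne
    rw [hinv₁] at h1
    have h2 : (0 : ℝ) < ⟪α • Ainv j (x - y) + (x - y), x - y⟫ := by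
      rw [inner_add_left, real_inner_smul_left]
      have h4 : (0 : ℝ) < ⟪Ainv j (x - y), x - y⟫ := by
        rwa [real_inner_comm]
      have h3 : (0 : ℝ) ≤ ⟪x - y, x - y⟫ := real_inner_self_nonneg
      positivity
    rw [h0, inner_zero_left] at h2
    exact lt_irrefl 0 h2
  have key : ∀ n (j : Fin J), p n j = A j (u n j) := by
    intro n
    induction n with
    | zero => intro j; rw [hinit j, hinv₁]
    | succ n ih =>
      intro j
      induction j using WellFoundedLT.induction with
      | _ j ihj =>
        apply hinj j
        rw [hp n j, hinv₂]
        have e1 : ∑ i ∈ Finset.univ.filter (· < j), p (n + 1) i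
            = ∑ i ∈ Finset.univ.filter (· < j), A i (u (n + 1) i) :=
          Finset.sum_congr rfl fun i hi => ihj i (by simpa using hi)
        have e2 : ∑ i ∈ Finset.univ.filter (j < ·), p n i
            = ∑ i ∈ Finset.univ.filter (j < ·), A i (u n i) :=
          Finset.sum_congr rfl fun i _ => ih i
        rw [e1, e2, ← hu n j]
        abel
  refine ⟨fun n j => key (n + 1) j, ?_⟩
  intro n hn
  match n, hn with
  | m + 1, _ =>
    set jJ : Fin J := ⟨J - 1, by omega⟩ with hjJ
    have hmax : ∀ i : Fin J, i ≤ jJ := fun i => by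
      rw [Fin.le_def]; have := i.isLt; simp [hjJ]; omega
    have hfe : Finset.univ.filter (jJ < ·) = ∅ :=
      Finset.filter_false_of_mem fun i _ => not_lt.mpr (hmax i)
    have h1 := hu m jJ
    rw [hfe, Finset.sum_empty, sub_zero] at h1
    have hone : Finset.univ.filter (fun i => ¬ i < jJ) = {jJ} := by
      ext i
      simp only [Finset.mem_filter, Finset.mem_univ, true_and, Finset.mem_singleton, not_lt]
      exact ⟨fun h => le_antisymm (hmax i) h, fun h => h ▸ le_refl _⟩
    have hsplit := Finset.sum_filter_add_sum_filter_not Finset.univ (· < jJ) (fun i => p (m + 1) i)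
    rw [hone, Finset.sum_singleton] at hsplit
    have h2 : α • u (m + 1) jJ = f - ∑ i, p (m + 1) i := by
      have e1 : ∑ i ∈ Finset.univ.filter (· < jJ), A i (u (m + 1) i)
          = ∑ i ∈ Finset.univ.filter (· < jJ), p (m + 1) i :=
        Finset.sum_congr rfl fun i _ => (key (m + 1) i).symm
      rw [e1, ← key (m + 1) jJ] at h1
      rw [← hsplit]
      rw [eq_sub_iff_add_eq] at h1 ⊢
      rw [← h1]; abel
    rw [← h2, smul_smul, one_div_mul_cancel hα.ne', one_smul]
end
end

section
/- The generalized Peaceman–Rachford splitting algorithm for min_{u∈V} F(u) + Σ_{j=1}^J G_j(B_j u) is a dualization of the successive subspace correction method applied to the dual problem min_{(p₁,…,p_J)} F*(−Σ_j B_jᵗp_j) + Σ_j G_j*(p_j): if u^{(0)} = ∇F*(−Σ_j B_jᵗp_j^{(0)}) and v_j^{(0)} = −B_jᵗp_j^{(0)} for every j, then u^{(n)} = ∇F*(−Σ_j B_jᵗp_j^{(n)}) and v_j^{(n)} = −B_jᵗp_j^{(n)} for all n ≥ 1 and every j. -/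
open scoped RealInnerProductSpace

noncomputable section

section Aux
variable {V : Type*} [NormedAddCommGroup V] [InnerProductSpace ℝ V] [CompleteSpace V]

lemma sc_grad_ineq (F : V → ℝ) (gradF : V → V)
    (hgrad : ∀ x : V, HasGradientAt F (gradF x) x)
    (μ : ℝ) (hsc : StrongConvexOn Set.univ μ F) (u x : V) :
    F u + ⟪gradF u, x - u⟫ + μ/2 * ‖x - u‖^2 ≤ F x := by
  set d := x - u with hd
  have hline : HasDerivAt (fun t : ℝ => F (u + t • d)) ⟪gradF u, d⟫ 0 := by
    have hF : HasFDerivAt F (InnerProductSpace.toDual ℝ V (gradF u)) u := by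
      simpa [hasGradientAt_iff_hasFDerivAt] using hgrad u
    have hc : HasDerivAt (fun t : ℝ => u + t • d) d 0 := by
      simpa using ((hasDerivAt_id (0:ℝ)).smul_const d).const_add u
    have hF2 : HasFDerivAt F ((InnerProductSpace.toDual ℝ V) (gradF u)) (u + (0:ℝ) • d) := by simpa using hF
    have := hF2.comp_hasDerivAt (f := fun t : ℝ => u + t • d) (x := (0:ℝ)) (by simpa using hc)
    simpa [InnerProductSpace.toDual_apply_apply, Function.comp_def] using this
  have key : ∀ t : ℝ, 0 < t → t < 1 →
      (F (u + t • d) - F u) / t ≤ F x - F u - (1 - t) * (μ/2 * ‖d‖^2) := by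
    intro t ht ht1
    have h := hsc.2 (Set.mem_univ u) (Set.mem_univ x)
      (show (0:ℝ) ≤ 1 - t by linarith) ht.le (by ring)
    have hcomb : (1 - t) • u + t • x = u + t • d := by
      simp [hd, smul_sub, sub_smul]; abel
    rw [hcomb] at h
    have hnorm : ‖u - x‖ = ‖d‖ := by rw [hd, norm_sub_rev]
    rw [hnorm] at h
    simp only [smul_eq_mul] at h
    rw [div_le_iff₀ ht]
    nlinarith
  have htend1 : Filter.Tendsto (fun t : ℝ => (F (u + t • d) - F u) / t)
      (nhdsWithin 0 (Set.Ioi 0)) (nhds ⟪gradF u, d⟫) := by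
    have h0 := hasDerivAt_iff_tendsto_slope.1 hline
    have hsub : nhdsWithin (0:ℝ) (Set.Ioi 0) ≤ nhdsWithin 0 {(0:ℝ)}ᶜ :=
      nhdsWithin_mono _ (by intro y hy; simpa using (ne_of_gt hy))
    refine (h0.mono_left hsub).congr ?_
    intro t
    simp [slope_def_field]
  have htend2 : Filter.Tendsto (fun t : ℝ => F x - F u - (1 - t) * (μ/2 * ‖d‖^2))
      (nhdsWithin 0 (Set.Ioi 0)) (nhds (F x - F u - μ/2 * ‖d‖^2)) := by
    have hcont : Continuous (fun t : ℝ => F x - F u - (1 - t) * (μ/2 * ‖d‖^2)) := by continuity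
    simpa using (hcont.tendsto 0).mono_left nhdsWithin_le_nhds
  have hle : ⟪gradF u, d⟫ ≤ F x - F u - μ/2 * ‖d‖^2 := by
    refine le_of_tendsto_of_tendsto htend1 htend2 ?_
    filter_upwards [Ioo_mem_nhdsGT_of_mem (by norm_num : (0:ℝ) ∈ Set.Ico 0 1)] with t ht
    exact key t ht.1 ht.2
  linarith


end Aux

section Sep
variable {W : Type*} [NormedAddCommGroup W] [InnerProductSpace ℝ W] [FiniteDimensional ℝ W]

lemma sep_core (G : W → EReal) (hp : ProperFn G) (hc : ConvexFn G)
    (hl : LowerSemicontinuous G) (w₀ : W) (r : ℝ) (hr : (r : EReal) < G w₀) :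
    ∃ (q : W) (β u' : ℝ), β ≤ 0 ∧
      (∀ (w : W) (t : ℝ), G w ≤ (t : EReal) → ⟪q, w⟫ + β * t < u') ∧
      u' < ⟪q, w₀⟫ + β * r := by
  haveI : CompleteSpace W := FiniteDimensional.complete ℝ W
  set E : Set (W × ℝ) := {z | G z.1 ≤ (z.2 : EReal)} with hE
  have hclosed : IsClosed E := by
    have hcont : Continuous (fun z : W × ℝ => ((z.1, (z.2 : EReal)) : W × EReal)) :=
      continuous_fst.prodMk (continuous_coe_real_ereal.comp continuous_snd)
    have hepi : IsClosed {p : W × EReal | G p.1 ≤ p.2} := hl.isClosed_epigraph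
    exact hepi.preimage hcont
  have hconv : Convex ℝ E := by
    rintro ⟨x1, t1⟩ h1 ⟨x2, t2⟩ h2 a b ha hb hab
    simp only [hE, Set.mem_setOf_eq] at h1 h2 ⊢
    obtain ⟨g1, hg1⟩ : ∃ g : ℝ, G x1 = (g : EReal) := by
      lift G x1 to ℝ using ⟨(h1.trans_lt (EReal.coe_lt_top t1)).ne, hp.2 x1⟩ with g
      exact ⟨g, rfl⟩
    obtain ⟨g2, hg2⟩ : ∃ g : ℝ, G x2 = (g : EReal) := by
      lift G x2 to ℝ using ⟨(h2.trans_lt (EReal.coe_lt_top t2)).ne, hp.2 x2⟩ with g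
      exact ⟨g, rfl⟩
    have hb1 : b ≤ 1 := by linarith
    have := hc x1 x2 b hb hb1
    have hab' : (1 : ℝ) - b = a := by linarith
    rw [hab', hg1, hg2] at this
    refine this.trans ?_
    rw [← EReal.coe_mul, ← EReal.coe_mul, ← EReal.coe_add, EReal.coe_le_coe_iff]
    have hg1' : g1 ≤ t1 := by rw [hg1] at h1; exact EReal.coe_le_coe_iff.1 h1
    have hg2' : g2 ≤ t2 := by rw [hg2] at h2; exact EReal.coe_le_coe_iff.1 h2
    have i1 := mul_le_mul_of_nonneg_left hg1' ha
    have i2 := mul_le_mul_of_nonneg_left hg2' hb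
    show a * g1 + b * g2 ≤ a • t1 + b • t2
    simp only [smul_eq_mul]
    linarith
  have hnot : (w₀, r) ∉ E := by
    simp only [hE, Set.mem_setOf_eq]
    exact fun h => absurd (h.trans_lt hr) (lt_irrefl _)
  obtain ⟨f, u', hsep, hstrict⟩ := geometric_hahn_banach_closed_point hconv hclosed hnot
  set β : ℝ := f (0, 1) with hβdef
  have hsplit : ∀ (w : W) (t : ℝ), f (w, t) = f (w, 0) + t * β := by
    intro w t
    have : ((w, t) : W × ℝ) = (w, 0) + t • ((0 : W), (1 : ℝ)) := by
      simp [Prod.ext_iff]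
    rw [this, map_add, map_smul, smul_eq_mul]
  -- β ≤ 0
  obtain ⟨w₁, hw₁⟩ := hp.1
  obtain ⟨g₁, hg₁⟩ : ∃ g : ℝ, G w₁ = (g : EReal) := by
    lift G w₁ to ℝ using ⟨hw₁, hp.2 w₁⟩ with g; exact ⟨g, rfl⟩
  have hβ : β ≤ 0 := by
    by_contra hβpos
    push_neg at hβpos
    set s₀ : ℝ := max 0 ((u' - f (w₁, 0) - g₁ * β) / β) with hs₀
    have hmem : ((w₁, g₁ + s₀) : W × ℝ) ∈ E := by
      simp only [hE, Set.mem_setOf_eq, hg₁]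
      exact EReal.coe_le_coe_iff.2 (by have : (0:ℝ) ≤ s₀ := le_max_left _ _; linarith)
    have h1 := hsep _ hmem
    rw [hsplit] at h1
    have hs₀ge : (u' - f (w₁, 0) - g₁ * β) / β ≤ s₀ := le_max_right _ _
    have := (div_le_iff₀ hβpos).1 hs₀ge
    nlinarith
  -- express via inner products
  set q : W := (InnerProductSpace.toDual ℝ W).symm (f.comp (ContinuousLinearMap.inl ℝ W ℝ)) with hq
  have hqw : ∀ w : W, ⟪q, w⟫ = f (w, 0) := by
    intro w
    rw [hq, InnerProductSpace.toDual_symm_apply]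
    simp
  refine ⟨q, β, u', hβ, ?_, ?_⟩
  · intro w t hwt
    have : ((w, t) : W × ℝ) ∈ E := hwt
    have := hsep _ this
    rw [hsplit] at this
    rw [hqw]
    linarith
  · rw [hsplit] at hstrict
    rw [hqw]
    linarith

lemma exists_minorant (G : W → EReal) (hp : ProperFn G) (hc : ConvexFn G)
    (hl : LowerSemicontinuous G) :
    ∃ (q : W) (c : ℝ), ∀ w : W, ((⟪q, w⟫ + c : ℝ) : EReal) ≤ G w := by
  obtain ⟨w₁, hw₁⟩ := hp.1
  obtain ⟨g₁, hg₁⟩ : ∃ g : ℝ, G w₁ = (g : EReal) := by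
    lift G w₁ to ℝ using ⟨hw₁, hp.2 w₁⟩ with g; exact ⟨g, rfl⟩
  obtain ⟨q, β, u', hβ, hsep, hstrict⟩ := sep_core G hp hc hl w₁ (g₁ - 1)
    (by rw [hg₁]; exact EReal.coe_lt_coe_iff.2 (by linarith))
  have hβneg : β < 0 := by
    rcases lt_or_eq_of_le hβ with h | h
    · exact h
    · exfalso
      have h1 := hsep w₁ g₁ (le_of_eq hg₁)
      rw [h] at hstrict h1
      simp only [zero_mul, add_zero] at hstrict h1
      linarith
  refine ⟨(-(1/β)) • q, u'/β, fun w => ?_⟩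
  rcases eq_top_or_lt_top (G w) with htop | hlt
  · rw [htop]; exact le_top
  · obtain ⟨g, hg⟩ : ∃ g : ℝ, G w = (g : EReal) := by
      lift G w to ℝ using ⟨hlt.ne, hp.2 w⟩ with g; exact ⟨g, rfl⟩
    rw [hg]
    refine EReal.coe_le_coe_iff.2 ?_
    have h1 := hsep w g (le_of_eq hg)
    rw [real_inner_smul_left]
    have hβ' : β ≠ 0 := ne_of_lt hβneg
    rw [show -(1/β) * ⟪q, w⟫ + u'/β = (u' - ⟪q, w⟫)/β by field_simp; ring,
      div_le_iff_of_neg hβneg]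
    nlinarith

lemma exists_minorant_at (G : W → EReal) (hp : ProperFn G) (hc : ConvexFn G)
    (hl : LowerSemicontinuous G) (w₀ : W) (r : ℝ) (hr : (r : EReal) < G w₀) :
    ∃ (q : W) (c : ℝ), (∀ w : W, ((⟪q, w⟫ + c : ℝ) : EReal) ≤ G w) ∧ r < ⟪q, w₀⟫ + c := by
  obtain ⟨q, β, u', hβ, hsep, hstrict⟩ := sep_core G hp hc hl w₀ r hr
  rcases lt_or_eq_of_le hβ with hβneg | hβzero
  · refine ⟨(-(1/β)) • q, u'/β, fun w => ?_, ?_⟩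
    · rcases eq_top_or_lt_top (G w) with htop | hlt
      · rw [htop]; exact le_top
      · obtain ⟨g, hg⟩ : ∃ g : ℝ, G w = (g : EReal) := by
          lift G w to ℝ using ⟨hlt.ne, hp.2 w⟩ with g; exact ⟨g, rfl⟩
        rw [hg]
        refine EReal.coe_le_coe_iff.2 ?_
        have h1 := hsep w g (le_of_eq hg)
        have hβ' : β ≠ 0 := ne_of_lt hβneg
        rw [real_inner_smul_left,
          show -(1/β) * ⟪q, w⟫ + u'/β = (u' - ⟪q, w⟫)/β by field_simp; ring,
          div_le_iff_of_neg hβneg]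
        nlinarith
    · have hβ' : β ≠ 0 := ne_of_lt hβneg
      rw [real_inner_smul_left,
        show -(1/β) * ⟪q, w₀⟫ + u'/β = (u' - ⟪q, w₀⟫)/β by field_simp; ring,
        lt_div_iff_of_neg hβneg]
      nlinarith
  · -- β = 0
    obtain ⟨q₀, c₀, hmin⟩ := exists_minorant G hp hc hl
    rw [hβzero] at hsep hstrict
    simp only [zero_mul, add_zero] at hsep hstrict
    set lam : ℝ := max 0 ((r - (⟪q₀, w₀⟫ + c₀)) / (⟪q, w₀⟫ - u') + 1) with hlam
    have hlam0 : 0 ≤ lam := le_max_left _ _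
    have hpos : 0 < ⟪q, w₀⟫ - u' := by linarith
    refine ⟨q₀ + lam • q, c₀ - lam * u', fun w => ?_, ?_⟩
    · rcases eq_top_or_lt_top (G w) with htop | hlt
      · rw [htop]; exact le_top
      · obtain ⟨g, hg⟩ : ∃ g : ℝ, G w = (g : EReal) := by
          lift G w to ℝ using ⟨hlt.ne, hp.2 w⟩ with g; exact ⟨g, rfl⟩
        have h1 := hsep w g (le_of_eq hg)
        have h2 : ((⟪q₀, w⟫ + c₀ : ℝ) : EReal) ≤ G w := hmin w
        rw [hg] at h2 ⊢
        refine EReal.coe_le_coe_iff.2 ?_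
        have h2' : ⟪q₀, w⟫ + c₀ ≤ g := EReal.coe_le_coe_iff.1 h2
        rw [inner_add_left, real_inner_smul_left]
        nlinarith
    · rw [inner_add_left, real_inner_smul_left]
      have hge : (r - (⟪q₀, w₀⟫ + c₀)) / (⟪q, w₀⟫ - u') + 1 ≤ lam := le_max_right _ _
      have := (div_le_iff₀ hpos).1 (by linarith : (r - (⟪q₀, w₀⟫ + c₀)) / (⟪q, w₀⟫ - u') ≤ lam - 1)
      nlinarith


end Sep

section Step
variable {V : Type*} [NormedAddCommGroup V] [InnerProductSpace ℝ V] [FiniteDimensional ℝ V]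
variable {W : Type*} [NormedAddCommGroup W] [InnerProductSpace ℝ W] [FiniteDimensional ℝ W]

lemma pr_step (B : V →ₗ[ℝ] W) (Bt : W →ₗ[ℝ] V)
    (hadj : ∀ (x : V) (w : W), ⟪B x, w⟫ = ⟪x, Bt w⟫)
    (G : W → EReal) (hp : ProperFn G) (hc : ConvexFn G) (hl : LowerSemicontinuous G)
    (F : V → ℝ) (gradF gradFstar : V → V)
    (hgrad : ∀ x, HasGradientAt F (gradF x) x)
    (μ : ℝ) (hμ : 0 < μ) (hsc : StrongConvexOn Set.univ μ F)
    (hinv₂ : Function.RightInverse gradFstar gradF)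
    (c u₀ ustar : V) (p0 pstar : W)
    (hu₀ : gradF u₀ = c - Bt p0)
    (hP : ∀ x : V,
      ((F ustar - F u₀ - ⟪gradF u₀, ustar - u₀⟫ + ⟪-Bt p0, ustar⟫ : ℝ) : EReal) + G (B ustar)
        ≤ ((F x - F u₀ - ⟪gradF u₀, x - u₀⟫ + ⟪-Bt p0, x⟫ : ℝ) : EReal) + G (B x))
    (hD : ∀ q : W, fenchelConjR F (c - Bt pstar) + fenchelConj G pstar
        ≤ fenchelConjR F (c - Bt q) + fenchelConj G q) :
    ustar = gradFstar (c - Bt pstar) := by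
  haveI : CompleteSpace V := FiniteDimensional.complete ℝ V
  have SC1 := sc_grad_ineq F gradF hgrad μ hsc
  set fs : V → ℝ := fun y => ⟪y, gradFstar y⟫ - F (gradFstar y) with hfs
  have hfy : ∀ y x : V, ⟪y, x⟫ - F x ≤ fs y := by
    intro y x
    have h := SC1 (gradFstar y) x
    rw [hinv₂ y, inner_sub_right] at h
    have h2 : (0:ℝ) ≤ μ/2 * ‖x - gradFstar y‖^2 := by positivity
    simp only [hfs]
    linarith
  have hfR : ∀ y : V, fenchelConjR F y = ((fs y : ℝ) : EReal) := by
    intro y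
    refine le_antisymm (iSup_le fun x => EReal.coe_le_coe_iff.2 (hfy y x)) ?_
    exact le_iSup_of_le (gradFstar y) (le_of_eq rfl)
  have huniq : ∀ (y x : V), fs y ≤ ⟪y, x⟫ - F x → x = gradFstar y := by
    intro y x hx
    have h := SC1 (gradFstar y) x
    rw [hinv₂ y, inner_sub_right] at h
    have hfsy : fs y = ⟪y, gradFstar y⟫ - F (gradFstar y) := rfl
    have hn : ‖x - gradFstar y‖^2 ≤ 0 := by nlinarith
    have : ‖x - gradFstar y‖ = 0 := by nlinarith [sq_nonneg ‖x - gradFstar y‖, norm_nonneg (x - gradFstar y)]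
    rw [norm_eq_zero, sub_eq_zero] at this
    exact this
  have hquad : ∀ y d : V, fs (y + d) ≤ fs y + ⟪gradFstar y, d⟫ + ‖d‖^2/(2*μ) := by
    intro y d
    set a := gradFstar y
    set b := gradFstar (y + d)
    have h := SC1 a b
    rw [hinv₂ y] at h
    have hfs1 : fs (y + d) = ⟪y + d, b⟫ - F b := rfl
    have hfs2 : fs y = ⟪y, a⟫ - F a := rfl
    have hi1 : ⟪y + d, b⟫ = ⟪y, b⟫ + ⟪d, b⟫ := inner_add_left _ _ _
    have hi2 : ⟪y, b - a⟫ = ⟪y, b⟫ - ⟪y, a⟫ := inner_sub_right _ _ _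
    have hi3 : ⟪d, b⟫ - ⟪d, a⟫ = ⟪d, b - a⟫ := (inner_sub_right _ _ _).symm
    have hcs : ⟪d, b - a⟫ ≤ ‖d‖ * ‖b - a‖ := real_inner_le_norm _ _
    have key2 : ⟪d, b - a⟫ * (2*μ) ≤ ‖d‖^2 + μ^2 * ‖b - a‖^2 := by
      nlinarith [sq_nonneg (‖d‖ - μ * ‖b - a‖), hcs, hμ, norm_nonneg d, norm_nonneg (b - a)]
    have hgoal : ⟪d, b - a⟫ ≤ ‖d‖^2/(2*μ) + μ/2 * ‖b - a‖^2 := by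
      have hre : ‖d‖^2/(2*μ) + μ/2 * ‖b - a‖^2 = (‖d‖^2 + μ^2 * ‖b - a‖^2)/(2*μ) := by
        field_simp
      rw [hre, le_div_iff₀ (by positivity)]
      exact key2
    have hinner_da : ⟪gradFstar y, d⟫ = ⟪d, a⟫ := real_inner_comm _ _
    rw [hfs1, hfs2, hinner_da]
    nlinarith
  -- G* facts
  obtain ⟨w₁, hw₁⟩ := hp.1
  obtain ⟨g₁, hg₁⟩ : ∃ g : ℝ, G w₁ = (g : EReal) := by
    lift G w₁ to ℝ using ⟨hw₁, hp.2 w₁⟩ with g; exact ⟨g, rfl⟩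
  have hGs_lb : ∀ q : W, ((⟪q, w₁⟫ - g₁ : ℝ) : EReal) ≤ fenchelConj G q := by
    intro q
    refine le_iSup_of_le w₁ ?_
    rw [hg₁, ← EReal.coe_sub]
  have hGs_ne_bot : ∀ q : W, fenchelConj G q ≠ ⊥ := by
    intro q h
    have := hGs_lb q
    rw [h, le_bot_iff] at this
    exact EReal.coe_ne_bot _ this
  have hconj_min : ∀ (q : W) (cc : ℝ), (∀ w : W, ((⟪q, w⟫ + cc : ℝ) : EReal) ≤ G w) →
      fenchelConj G q ≤ ((-cc : ℝ) : EReal) := by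
    intro q cc hmin
    refine iSup_le fun w => ?_
    calc ((⟪q, w⟫ : ℝ) : EReal) - G w ≤ ((⟪q, w⟫ : ℝ) : EReal) - ((⟪q, w⟫ + cc : ℝ) : EReal) :=
          EReal.sub_le_sub (le_refl _) (hmin w)
      _ = ((-cc : ℝ) : EReal) := by rw [← EReal.coe_sub]; norm_num
  -- G* pstar is real
  obtain ⟨qb, cb, hqb⟩ := exists_minorant G hp hc hl
  have hDq := hD qb
  rw [hfR, hfR] at hDq
  have hGpstar_ne_top : fenchelConj G pstar ≠ ⊤ := by
    intro htop
    rw [htop] at hDq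
    have h1 : ((fs (c - Bt pstar) : ℝ) : EReal) + ⊤ = ⊤ := EReal.add_top_of_ne_bot (EReal.coe_ne_bot _)
    rw [h1] at hDq
    have h2 : fenchelConj G qb ≤ ((-cb : ℝ) : EReal) := hconj_min qb cb hqb
    have h3 : (⊤ : EReal) ≤ ((fs (c - Bt qb) + -cb : ℝ) : EReal) := by
      refine hDq.trans ?_
      rw [EReal.coe_add]
      exact add_le_add_right h2 _
    exact absurd (h3.trans_lt (EReal.coe_lt_top _)) (lt_irrefl _)
  obtain ⟨rstar, hrstar⟩ : ∃ rr : ℝ, fenchelConj G pstar = (rr : EReal) := by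
    lift fenchelConj G pstar to ℝ using ⟨hGpstar_ne_top, hGs_ne_bot pstar⟩ with rr; exact ⟨rr, rfl⟩
  -- Fenchel-Young for Gs: real bound
  have hFY : ∀ (q : W) (s : ℝ), fenchelConj G q = (s : EReal) → ∀ w : W, ∀ g : ℝ, G w = (g : EReal) →
      ⟪q, w⟫ - g ≤ s := by
    intro q s hq w g hw
    have hle : ((⟪q, w⟫ - g : ℝ) : EReal) ≤ fenchelConj G q := by
      rw [EReal.coe_sub, ← hw]
      exact le_iSup (fun w => (((⟪q, w⟫ : ℝ) : EReal) - G w)) w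
    rw [hq] at hle
    exact EReal.coe_le_coe_iff.1 hle
  -- the subgradient inequality
  set y : V := c - Bt pstar with hy
  set ut : V := gradFstar y with hut
  set wt : W := B ut with hwt
  have hsubgrad : ∀ q : W, ((rstar + ⟪wt, q - pstar⟫ : ℝ) : EReal) ≤ fenchelConj G q := by
    intro q
    rcases eq_top_or_lt_top (fenchelConj G q) with htop | hlt
    · rw [htop]; exact le_top
    obtain ⟨s, hs⟩ : ∃ s : ℝ, fenchelConj G q = (s : EReal) := by
      lift fenchelConj G q to ℝ using ⟨hlt.ne, hGs_ne_bot q⟩ with s; exact ⟨s, rfl⟩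
    rw [hs, EReal.coe_le_coe_iff]
    set δ : V := Bt (q - pstar) with hδ
    set C : ℝ := ‖δ‖^2/(2*μ) with hC
    have hC0 : 0 ≤ C := by positivity
    have hiwt : ⟪wt, q - pstar⟫ = ⟪ut, δ⟫ := by
      rw [hwt, hδ, ← hadj]
    rw [hiwt]
    have hkey : ∀ t : ℝ, 0 < t → t < 1 → rstar + ⟪ut, δ⟫ ≤ s + t * C := by
      intro t ht ht1
      have hDt := hD (pstar + t • (q - pstar))
      rw [hfR, hfR] at hDt
      have harg : c - Bt (pstar + t • (q - pstar)) = y + (-t) • δ := by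
        simp [hy, hδ, map_add, map_smul]
        module
      rw [harg] at hDt
      -- convexity bound for fenchelConj G at the combination
      have hGconv : fenchelConj G (pstar + t • (q - pstar)) ≤ (((1-t) * rstar + t * s : ℝ) : EReal) := by
        refine iSup_le fun w => ?_
        rcases eq_top_or_lt_top (G w) with hwtop | hwlt
        · rw [hwtop]
          rw [EReal.sub_top]
          exact bot_le
        obtain ⟨g, hg⟩ : ∃ g : ℝ, G w = (g : EReal) := by
          lift G w to ℝ using ⟨hwlt.ne, hp.2 w⟩ with g; exact ⟨g, rfl⟩
        rw [hg, ← EReal.coe_sub, EReal.coe_le_coe_iff]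
        have h1 : ⟪pstar, w⟫ - g ≤ rstar := hFY pstar rstar (by rw [hrstar]) w g hg
        have h2 : ⟪q, w⟫ - g ≤ s := hFY q s hs w g hg
        have hexp : ⟪pstar + t • (q - pstar), w⟫ =
            (1 - t) * ⟪pstar, w⟫ + t * ⟪q, w⟫ := by
          rw [inner_add_left, real_inner_smul_left, inner_sub_left]
          ring
        rw [hexp]
        nlinarith
      have hchain : ((fs y + rstar : ℝ) : EReal) ≤
          ((fs (y + (-t) • δ) + ((1-t) * rstar + t * s) : ℝ) : EReal) := by
        rw [EReal.coe_add, EReal.coe_add]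
        calc ((fs y : ℝ) : EReal) + (rstar : EReal)
            = ((fs y : ℝ) : EReal) + fenchelConj G pstar := by rw [hrstar]
          _ ≤ ((fs (y + (-t) • δ) : ℝ) : EReal) + fenchelConj G (pstar + t • (q - pstar)) := hDt
          _ ≤ _ := add_le_add_right hGconv _
      rw [EReal.coe_le_coe_iff] at hchain
      have hq2 := hquad y ((-t) • δ)
      have hn : ‖(-t) • δ‖^2 = t^2 * ‖δ‖^2 := by
        rw [norm_smul]
        simp [abs_of_pos ht]
        ring
      have hinn : ⟪gradFstar y, (-t) • δ⟫ = -t * ⟪ut, δ⟫ := by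
        rw [real_inner_smul_right, hut]
      rw [hn, hinn] at hq2
      have hC' : t^2 * ‖δ‖^2/(2*μ) = t * (t * C) := by
        rw [hC]; field_simp
      rw [hC'] at hq2
      have ht2 : t * (rstar + ⟪ut, δ⟫) ≤ t * (s + t * C) := by linarith
      exact le_of_mul_le_mul_left ht2 ht
    by_contra hcon
    push_neg at hcon
    have hε0 : 0 < rstar + ⟪ut, δ⟫ - s := by linarith
    have hden : (0:ℝ) < 2 * (C + 1) := by linarith
    have ht0 : 0 < min (1/2) ((rstar + ⟪ut, δ⟫ - s) / (2 * (C + 1))) :=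
      lt_min (by norm_num) (div_pos hε0 hden)
    have ht1 : min (1/2) ((rstar + ⟪ut, δ⟫ - s) / (2 * (C + 1))) < 1 :=
      lt_of_le_of_lt (min_le_left _ _) (by norm_num)
    have hk := hkey _ ht0 ht1
    have htle : min (1/2) ((rstar + ⟪ut, δ⟫ - s) / (2 * (C + 1))) ≤
        (rstar + ⟪ut, δ⟫ - s) / (2 * (C + 1)) := min_le_right _ _
    have h5 : min (1/2) ((rstar + ⟪ut, δ⟫ - s) / (2 * (C + 1))) * C ≤
        (rstar + ⟪ut, δ⟫ - s) / (2 * (C + 1)) * C := mul_le_mul_of_nonneg_right htle hC0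
    have h6 : (rstar + ⟪ut, δ⟫ - s) / (2 * (C + 1)) * C < rstar + ⟪ut, δ⟫ - s := by
      have he : (rstar + ⟪ut, δ⟫ - s) / (2 * (C + 1)) * C =
          (rstar + ⟪ut, δ⟫ - s) * (C / (2 * (C + 1))) := by ring
      have hlt1 : C / (2 * (C + 1)) < 1 := by
        rw [div_lt_one hden]; linarith
      rw [he]
      calc (rstar + ⟪ut, δ⟫ - s) * (C / (2 * (C + 1)))
          < (rstar + ⟪ut, δ⟫ - s) * 1 := by
            exact mul_lt_mul_of_pos_left hlt1 hε0
        _ = rstar + ⟪ut, δ⟫ - s := mul_one _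
    linarith
  -- the Fenchel-Moreau style bound
  have hkeyG : G wt ≤ ((⟪pstar, wt⟫ - rstar : ℝ) : EReal) := by
    by_contra hcon
    push_neg at hcon
    obtain ⟨q, cc, hminq, hstr⟩ := exists_minorant_at G hp hc hl wt (⟪pstar, wt⟫ - rstar) hcon
    have h1 : fenchelConj G q ≤ ((-cc : ℝ) : EReal) := hconj_min q cc hminq
    have h2 := (hsubgrad q).trans h1
    rw [EReal.coe_le_coe_iff] at h2
    have h3 : ⟪wt, q - pstar⟫ = ⟪q, wt⟫ - ⟪pstar, wt⟫ := by
      rw [inner_sub_right, real_inner_comm wt q, real_inner_comm wt pstar]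
    rw [h3] at h2
    linarith
  -- main chain
  have hPu := hP ut
  have hne : G (B ustar) ≠ ⊤ := by
    intro htop
    rw [htop] at hPu
    have h1 : ((F ustar - F u₀ - ⟪gradF u₀, ustar - u₀⟫ + ⟪-Bt p0, ustar⟫ : ℝ) : EReal) + ⊤ = ⊤ :=
      EReal.add_top_of_ne_bot (EReal.coe_ne_bot _)
    rw [h1] at hPu
    have h2 : (⊤ : EReal) ≤ ((F ut - F u₀ - ⟪gradF u₀, ut - u₀⟫ + ⟪-Bt p0, ut⟫ + (⟪pstar, wt⟫ - rstar) : ℝ) : EReal) := by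
      refine hPu.trans ?_
      rw [EReal.coe_add (F ut - F u₀ - ⟪gradF u₀, ut - u₀⟫ + ⟪-Bt p0, ut⟫)]
      exact add_le_add_right hkeyG _
    exact absurd (h2.trans_lt (EReal.coe_lt_top _)) (lt_irrefl _)
  obtain ⟨g, hg⟩ : ∃ g : ℝ, G (B ustar) = (g : EReal) := by
    lift G (B ustar) to ℝ using ⟨hne, hp.2 _⟩ with g; exact ⟨g, rfl⟩
  have hmain : F ustar - F u₀ - ⟪gradF u₀, ustar - u₀⟫ + ⟪-Bt p0, ustar⟫ + g ≤
      F ut - F u₀ - ⟪gradF u₀, ut - u₀⟫ + ⟪-Bt p0, ut⟫ + (⟪pstar, wt⟫ - rstar) := by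
    have h2 : ((F ustar - F u₀ - ⟪gradF u₀, ustar - u₀⟫ + ⟪-Bt p0, ustar⟫ + g : ℝ) : EReal) ≤
        ((F ut - F u₀ - ⟪gradF u₀, ut - u₀⟫ + ⟪-Bt p0, ut⟫ + (⟪pstar, wt⟫ - rstar) : ℝ) : EReal) := by
      rw [EReal.coe_add, EReal.coe_add, ← hg]
      exact hPu.trans (by rw [EReal.coe_add (F ut - F u₀ - ⟪gradF u₀, ut - u₀⟫ + ⟪-Bt p0, ut⟫)]; exact add_le_add_right hkeyG _)
    exact EReal.coe_le_coe_iff.1 h2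
  have hFYu : ⟪pstar, B ustar⟫ - g ≤ rstar := hFY pstar rstar (by rw [hrstar]) _ g hg
  -- unfold inner products
  have e1 : ⟪gradF u₀, ustar - u₀⟫ = ⟪c, ustar⟫ - ⟪Bt p0, ustar⟫ - ⟪gradF u₀, u₀⟫ := by
    rw [inner_sub_right, hu₀, inner_sub_left]
  have e2 : ⟪gradF u₀, ut - u₀⟫ = ⟪c, ut⟫ - ⟪Bt p0, ut⟫ - ⟪gradF u₀, u₀⟫ := by
    rw [inner_sub_right, hu₀, inner_sub_left]
  have e3 : ⟪-Bt p0, ustar⟫ = -⟪Bt p0, ustar⟫ := inner_neg_left _ _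
  have e4 : ⟪-Bt p0, ut⟫ = -⟪Bt p0, ut⟫ := inner_neg_left _ _
  have e5 : ⟪pstar, wt⟫ = ⟪Bt pstar, ut⟫ := by
    rw [hwt, real_inner_comm, hadj]
    exact real_inner_comm _ _
  have e6 : ⟪pstar, B ustar⟫ = ⟪Bt pstar, ustar⟫ := by
    rw [real_inner_comm, hadj]
    exact real_inner_comm _ _
  have e7 : fs y = ⟪c, ut⟫ - ⟪Bt pstar, ut⟫ - F ut := by
    have : fs y = ⟪y, ut⟫ - F ut := rfl
    rw [this, hy, inner_sub_left]
  have e8 : ⟪y, ustar⟫ = ⟪c, ustar⟫ - ⟪Bt pstar, ustar⟫ := by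
    rw [hy, inner_sub_left]
  have hfinal : fs y ≤ ⟪y, ustar⟫ - F ustar := by
    rw [e1, e2, e3, e4, e5] at hmain
    rw [e6] at hFYu
    rw [e7, e8]
    linarith
  exact huniq y ustar hfinal


end Step

/-- Theorem 5.2. The generalized Peaceman–Rachford splitting algorithm for
`min F(u) + Σⱼ Gⱼ(Bⱼu)` is a dualization of the successive subspace correction (block
Gauss–Seidel) method applied to the dual problem `min F*(−Σⱼ Bⱼᵗpⱼ) + Σⱼ Gⱼ*(pⱼ)`: if
`u⁽⁰⁾ = ∇F*(−Σⱼ Bⱼᵗpⱼ⁽⁰⁾)` and `vⱼ⁽⁰⁾ = −Bⱼᵗpⱼ⁽⁰⁾`, then `u⁽ⁿ⁾ = ∇F*(−Σⱼ Bⱼᵗpⱼ⁽ⁿ⁾)`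
and `vⱼ⁽ⁿ⁾ = −Bⱼᵗpⱼ⁽ⁿ⁾` for all `n ≥ 1`.
Here `u n j` denotes the intermediate iterate `u⁽ⁿ⁺ʲᐟᴶ⁾` (`0 ≤ j ≤ J`, `u⁽ⁿ⁾ = u n 0`). -/

theorem generalized_peaceman_rachford_is_dualization_of_ssc
    {V : Type*} [NormedAddCommGroup V] [InnerProductSpace ℝ V] [FiniteDimensional ℝ V]
    (J : ℕ) (W : Fin J → Type*)
    [∀ j, NormedAddCommGroup (W j)] [∀ j, InnerProductSpace ℝ (W j)]
    [∀ j, FiniteDimensional ℝ (W j)]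
    (B : ∀ j : Fin J, V →ₗ[ℝ] W j) (Bt : ∀ j : Fin J, W j →ₗ[ℝ] V)
    (hadj : ∀ (j : Fin J) (v : V) (w : W j), ⟪B j v, w⟫ = ⟪v, Bt j w⟫)
    (G : ∀ j : Fin J, W j → EReal)
    (hG : ∀ j, ProperFn (G j) ∧ ConvexFn (G j) ∧ LowerSemicontinuous (G j))
    -- `F` is differentiable, strongly convex, with Lipschitz gradient; `∇F` is a bijection
    -- with inverse `∇F* = gradFstar`
    (F : V → ℝ) (gradF gradFstar : V → V)
    (hgrad : ∀ x : V, HasGradientAt F (gradF x) x)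
    (μ : ℝ) (hμ : 0 < μ) (hsc : StrongConvexOn Set.univ μ F)
    (L : NNReal) (hlip : LipschitzWith L gradF)
    (hinv₁ : Function.LeftInverse gradFstar gradF)
    (hinv₂ : Function.RightInverse gradFstar gradF)
    -- generalized Peaceman–Rachford iterates
    (u : ℕ → ℕ → V) (v : ℕ → Fin J → V)
    (humin : ∀ (n : ℕ) (j : Fin J), ∀ x : V,
      ((F (u n (j.1 + 1)) - F (u n j.1) - ⟪gradF (u n j.1), u n (j.1 + 1) - u n j.1⟫ +
          ⟪v n j, u n (j.1 + 1)⟫ : ℝ) : EReal) + G j (B j (u n (j.1 + 1))) ≤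
        ((F x - F (u n j.1) - ⟪gradF (u n j.1), x - u n j.1⟫ + ⟪v n j, x⟫ : ℝ) : EReal) +
          G j (B j x))
    (hvrec : ∀ (n : ℕ) (j : Fin J),
      v (n + 1) j = v n j + gradF (u n (j.1 + 1)) - gradF (u n j.1))
    (huchain : ∀ n : ℕ, u (n + 1) 0 = u n J)
    -- SSC (block Gauss–Seidel) iterates for the dual problem
    (p : ℕ → ∀ j : Fin J, W j)
    (hpmin : ∀ (n : ℕ) (j : Fin J), ∀ pj : W j,
      fenchelConjR F (-(Bt j (p (n + 1) j)) -
          (∑ i ∈ Finset.univ.filter (· < j), Bt i (p (n + 1) i)) -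
          ∑ i ∈ Finset.univ.filter (j < ·), Bt i (p n i)) + fenchelConj (G j) (p (n + 1) j) ≤
        fenchelConjR F (-(Bt j pj) -
            (∑ i ∈ Finset.univ.filter (· < j), Bt i (p (n + 1) i)) -
            ∑ i ∈ Finset.univ.filter (j < ·), Bt i (p n i)) + fenchelConj (G j) pj)
    -- initial conditions
    (hinitu : u 0 0 = gradFstar (-(∑ j, Bt j (p 0 j))))
    (hinitv : ∀ j, v 0 j = -(Bt j (p 0 j))) :
    ∀ n : ℕ, 1 ≤ n →
      u n 0 = gradFstar (-(∑ j, Bt j (p n j))) ∧ ∀ j, v n j = -(Bt j (p n j)) := by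
    -- filter identities
  have hf1 : ∀ j : Fin J, Finset.univ.filter (fun i : Fin J => i.1 < j.1) =
      Finset.univ.filter (· < j) := by
    intro j
    exact Finset.filter_congr (fun i _ => by rw [Fin.lt_def])
  have hf2 : ∀ j : Fin J, Finset.univ.filter (fun i : Fin J => j.1 + 1 ≤ i.1) =
      Finset.univ.filter (j < ·) := by
    intro j
    refine Finset.filter_congr (fun i _ => ?_)
    rw [Fin.lt_def]
    omega
  have hjnot : ∀ j : Fin J, j ∉ Finset.univ.filter (fun i : Fin J => j < i) := by
    intro j
    simp only [Finset.mem_filter, Finset.mem_univ, true_and]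
    exact lt_irrefl j
  have hf3 : ∀ j : Fin J, Finset.univ.filter (fun i : Fin J => j.1 ≤ i.1) =
      insert j (Finset.univ.filter (fun i : Fin J => j < i)) := by
    intro j
    ext i
    simp only [Finset.mem_filter, Finset.mem_insert, Finset.mem_univ, true_and]
    rw [Fin.lt_def, Fin.ext_iff]
    omega
  have hjnot2 : ∀ j : Fin J, j ∉ Finset.univ.filter (fun i : Fin J => i.1 < j.1) := by
    intro j
    simp only [Finset.mem_filter, Finset.mem_univ, true_and]
    omega
  have hf4 : ∀ j : Fin J, Finset.univ.filter (fun i : Fin J => i.1 < j.1 + 1) =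
      insert j (Finset.univ.filter (fun i : Fin J => i.1 < j.1)) := by
    intro j
    ext i
    simp only [Finset.mem_filter, Finset.mem_insert, Finset.mem_univ, true_and]
    rw [Fin.ext_iff]
    omega
  -- the invariant
  have main : ∀ n : ℕ, gradF (u n 0) = -(∑ j, Bt j (p n j)) ∧
      ∀ j, v n j = -(Bt j (p n j)) := by
    intro n
    induction n with
    | zero =>
      refine ⟨?_, hinitv⟩
      rw [hinitu, hinv₂]
    | succ n ih =>
      -- sweep invariant
      have hQ : ∀ k : ℕ, k ≤ J → gradF (u n k) =
          -((∑ i ∈ Finset.univ.filter (fun i : Fin J => i.1 < k), Bt i (p (n+1) i)) +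
            ∑ i ∈ Finset.univ.filter (fun i : Fin J => k ≤ i.1), Bt i (p n i)) := by
        intro k
        induction k with
        | zero =>
          intro _
          have h1 : Finset.univ.filter (fun i : Fin J => i.1 < 0) = ∅ :=
            Finset.filter_false_of_mem (fun i _ => by omega)
          have h2 : Finset.univ.filter (fun i : Fin J => 0 ≤ i.1) = Finset.univ :=
            Finset.filter_true_of_mem (fun i _ => Nat.zero_le _)
          rw [h1, h2, Finset.sum_empty, zero_add]
          exact ih.1
        | succ k ihk =>
          intro hk1
          have hkJ : k < J := by omega
          set j : Fin J := ⟨k, hkJ⟩ with hj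
          have hQk := ihk (by omega)
          -- define c
          set S₁ : V := ∑ i ∈ Finset.univ.filter (· < j), Bt i (p (n + 1) i) with hS₁
          set S₂ : V := ∑ i ∈ Finset.univ.filter (j < ·), Bt i (p n i) with hS₂
          have hc : ∀ pj : W j, -(Bt j pj) - S₁ - S₂ = (-S₁ - S₂) - Bt j pj := by
            intro pj; abel
          have hu₀ : gradF (u n k) = (-S₁ - S₂) - Bt j (p n j) := by
            rw [hQk]
            have hA : Finset.univ.filter (fun i : Fin J => i.1 < k) =
                Finset.univ.filter (· < j) := hf1 j
            have hB : (∑ i ∈ Finset.univ.filter (fun i : Fin J => k ≤ i.1), Bt i (p n i)) =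
                Bt j (p n j) + S₂ := by
              rw [show Finset.univ.filter (fun i : Fin J => k ≤ i.1) =
                insert j (Finset.univ.filter (fun i : Fin J => j < i)) from hf3 j,
                Finset.sum_insert (hjnot j)]
            rw [hA, hB]
            abel
          have hv := ih.2 j
          have hP := humin n j
          rw [hv] at hP
          have hD : ∀ q : W j, fenchelConjR F ((-S₁ - S₂) - Bt j (p (n+1) j)) +
              fenchelConj (G j) (p (n+1) j) ≤
              fenchelConjR F ((-S₁ - S₂) - Bt j q) + fenchelConj (G j) q := by
            intro q
            have := hpmin n j q
            rw [hc, hc] at this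
            exact this
          have hstep := pr_step (B j) (Bt j) (hadj j) (G j) (hG j).1 (hG j).2.1 (hG j).2.2
            F gradF gradFstar hgrad μ hμ hsc hinv₂ (-S₁ - S₂) (u n k) (u n (k+1))
            (p n j) (p (n+1) j) hu₀ hP hD
          have hgr : gradF (u n (k+1)) = (-S₁ - S₂) - Bt j (p (n+1) j) := by
            rw [hstep, hinv₂]
          rw [hgr]
          have hA' : (∑ i ∈ Finset.univ.filter (fun i : Fin J => i.1 < k + 1),
              Bt i (p (n+1) i)) = Bt j (p (n+1) j) + S₁ := by
            rw [hf4 j, Finset.sum_insert (hjnot2 j), hf1 j]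
          have hB' : (∑ i ∈ Finset.univ.filter (fun i : Fin J => k + 1 ≤ i.1),
              Bt i (p n i)) = S₂ := by
            rw [hf2 j]
          rw [hA', hB']
          abel
      -- conclude parts
      have hQJ := hQ J (le_refl J)
      have h1 : Finset.univ.filter (fun i : Fin J => i.1 < J) = Finset.univ :=
        Finset.filter_true_of_mem (fun i _ => i.isLt)
      have h2 : Finset.univ.filter (fun i : Fin J => J ≤ i.1) = ∅ :=
        Finset.filter_false_of_mem (fun i _ => by omega)
      rw [h1, h2, Finset.sum_empty, add_zero] at hQJ
      constructor
      · rw [huchain n]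
        exact hQJ
      · intro j
        have h3 := hvrec n j
        have hQ1 := hQ j.1 (le_of_lt j.isLt)
        have hQ2 := hQ (j.1 + 1) j.isLt
        rw [h3, hQ1, hQ2, ih.2 j]
        have hA : Finset.univ.filter (fun i : Fin J => i.1 < j.1 + 1) =
            insert j (Finset.univ.filter (fun i : Fin J => i.1 < j.1)) := hf4 j
        have hB : Finset.univ.filter (fun i : Fin J => j.1 ≤ i.1) =
            insert j (Finset.univ.filter (fun i : Fin J => j < i)) := hf3 j
        have hC : Finset.univ.filter (fun i : Fin J => j.1 + 1 ≤ i.1) =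
            Finset.univ.filter (fun i : Fin J => j < i) := by
          rw [hf2 j]
        rw [hA, hB, hC, Finset.sum_insert (hjnot2 j), Finset.sum_insert (hjnot j)]
        abel
  intro n _
  refine ⟨?_, (main n).2⟩
  rw [← (main n).1, hinv₁]
end
end

section
/- Define u_j^{(n)} for n ≥ 1 by the relation −B_jᵗλ^{(n)} ∈ ∂F_j(u_j^{(n)}). Then the dualization-based ADMM is a dualization of the generalized Douglas–Rachford splitting algorithm applied to the dual problem min_{p∈V_J} (1/(2β))‖p‖² + ⟨g,p⟩ + Σ_{j=1}^{J−1} F_j*(−B_jᵗp): if v_j^{(0)} = q_j^{(0)} for all j and λ^{(0)} = p^{(0)}, then λ̂^{(n+1,j)} = p̂^{(n+1,j)} for all n ≥ 0 and 0 ≤ j ≤ J−1, and v_j^{(n)} = q_j^{(n)} for all j and λ^{(n)} = p^{(n)} for all n ≥ 1. -/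
open scoped RealInnerProductSpace

noncomputable section

/-- The subdifferential of an extended-real-valued function. -/
def subdiff {E : Type*} [NormedAddCommGroup E] [InnerProductSpace ℝ E]
    (F : E → EReal) (u : E) : Set E :=
  {x | ∀ v : E, F u + ((⟪x, v - u⟫ : ℝ) : EReal) ≤ F v}

lemma key_step {Z V : Type*}
    [NormedAddCommGroup Z] [InnerProductSpace ℝ Z]
    [NormedAddCommGroup V] [InnerProductSpace ℝ V]
    (F : V → EReal) (hFp : ProperFn F) (hFc : ConvexFn F)
    (B : V →ₗ[ℝ] Z) (Bt : Z →ₗ[ℝ] V)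
    (hadj : ∀ (x : V) (z : Z), ⟪B x, z⟫ = ⟪x, Bt z⟫)
    (β : ℝ) (hβ : 0 < β) (P vv : Z) (uh : V) (ph : Z)
    (hmin : ∀ x : V,
      F uh + ((⟪P, B uh⟫ + β / 2 * ‖B uh - vv‖ ^ 2 : ℝ) : EReal) ≤
        F x + ((⟪P, B x⟫ + β / 2 * ‖B x - vv‖ ^ 2 : ℝ) : EReal))
    (hpmin : ∀ x : Z,
      ((1 / (2 * β) * ‖ph - P‖ ^ 2 + ⟪vv, ph⟫ : ℝ) : EReal) + fenchelConj F (-(Bt ph)) ≤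
        ((1 / (2 * β) * ‖x - P‖ ^ 2 + ⟪vv, x⟫ : ℝ) : EReal) + fenchelConj F (-(Bt x))) :
    ph = P + β • (B uh - vv) := by
  obtain ⟨⟨u0, hu0⟩, hbot⟩ := hFp
  set y := P + β • (B uh - vv) with hy
  -- F uh is finite
  have huhtop : F uh ≠ ⊤ := by
    intro h
    have h0 : ((F u0).toReal : EReal) = F u0 := EReal.coe_toReal hu0 (hbot u0)
    have := hmin u0
    rw [h, EReal.top_add_coe, ← h0, ← EReal.coe_add] at this
    exact (EReal.coe_lt_top _).not_ge this
  have ha : F uh = ((F uh).toReal : EReal) := (EReal.coe_toReal huhtop (hbot uh)).symm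
  set a := (F uh).toReal with hadef
  -- subgradient inequality
  have hsub : ∀ u : V, ((a - ⟪y, B u - B uh⟫ : ℝ) : EReal) ≤ F u := by
    intro u
    by_cases hu : F u = ⊤
    · rw [hu]; exact le_top
    · have hb : F u = ((F u).toReal : EReal) := (EReal.coe_toReal hu (hbot u)).symm
      set b := (F u).toReal with hbdef
      set d := B u - B uh with hd
      set c := β / 2 * ‖d‖ ^ 2 with hc
      have hc0 : 0 ≤ c := by positivity
      have hstep : ∀ t : ℝ, 0 < t → t ≤ 1 → a - ⟪y, d⟫ ≤ b + c * t := by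
        intro t ht ht1
        have hconv := hFc uh u t ht.le ht1
        rw [ha, hb, ← EReal.coe_mul, ← EReal.coe_mul, ← EReal.coe_add] at hconv
        have hBx : B ((1 - t) • uh + t • u) = B uh + t • d := by
          rw [hd]; simp only [map_add, map_smul, smul_sub]; module
        have hm := hmin ((1 - t) • uh + t • u)
        rw [ha, hBx, ← EReal.coe_add] at hm
        have h2 := le_trans hm (add_le_add hconv (le_refl
          ((⟪P, B uh + t • d⟫ + β / 2 * ‖B uh + t • d - vv‖ ^ 2 : ℝ) : EReal)))
        rw [← EReal.coe_add, EReal.coe_le_coe_iff] at h2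
        -- expand inner products and norms
        have e1 : ⟪P, B uh + t • d⟫ = ⟪P, B uh⟫ + t * ⟪P, d⟫ := by
          rw [inner_add_right, real_inner_smul_right]
        have e2 : B uh + t • d - vv = (B uh - vv) + t • d := by abel
        have e3 : ‖(B uh - vv) + t • d‖ ^ 2
            = ‖B uh - vv‖ ^ 2 + 2 * (t * ⟪B uh - vv, d⟫) + t ^ 2 * ‖d‖ ^ 2 := by
          rw [norm_add_sq_real, real_inner_smul_right, norm_smul]
          simp [mul_pow, Real.norm_eq_abs, sq_abs]
        rw [e1, e2, e3] at h2
        have e4 : ⟪y, d⟫ = ⟪P, d⟫ + β * ⟪B uh - vv, d⟫ := by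
          rw [hy, inner_add_left, real_inner_smul_left]
        rw [e4, hc]
        nlinarith [h2, ht, sq_nonneg t]
      have hfin : a - ⟪y, d⟫ ≤ b := by
        refine le_of_forall_pos_le_add fun ε hε => ?_
        have ht' := hstep (min 1 (ε / (c + 1))) (by positivity) (min_le_left _ _)
        have hle : c * min 1 (ε / (c + 1)) ≤ ε := by
          have h1 : c * min 1 (ε / (c + 1)) ≤ c * (ε / (c + 1)) :=
            mul_le_mul_of_nonneg_left (min_le_right _ _) hc0
          have h2 : c * (ε / (c + 1)) ≤ ε := by
            rw [mul_div_assoc'] at *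
            rw [div_le_iff₀ (by linarith)]
            nlinarith
          linarith
        linarith
      rw [hb]
      exact_mod_cast hfin
  -- upper bound on the conjugate at y
  have hconjy : fenchelConj F (-(Bt y)) ≤ ((-⟪B uh, y⟫ - a : ℝ) : EReal) := by
    rw [fenchelConj]
    refine iSup_le fun w => ?_
    by_cases hw : F w = ⊤
    · rw [hw, EReal.sub_top]
      exact bot_le
    · have hb : F w = ((F w).toReal : EReal) := (EReal.coe_toReal hw (hbot w)).symm
      rw [hb, ← EReal.coe_sub, EReal.coe_le_coe_iff]
      have h1 : a - ⟪y, B w - B uh⟫ ≤ (F w).toReal := by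
        have := hsub w
        rw [hb] at this
        exact_mod_cast this
      have e1 : ⟪-(Bt y), w⟫ = -⟪y, B w⟫ := by
        rw [inner_neg_left, real_inner_comm w (Bt y), ← hadj, real_inner_comm]
      have e2 : ⟪y, B w - B uh⟫ = ⟪y, B w⟫ - ⟪y, B uh⟫ := inner_sub_right y _ _
      have e3 : ⟪B uh, y⟫ = ⟪y, B uh⟫ := real_inner_comm _ _
      rw [e1]; linarith
  -- lower bound on the conjugate at any x
  have hconjlb : ∀ x : Z, ((-⟪B uh, x⟫ - a : ℝ) : EReal) ≤ fenchelConj F (-(Bt x)) := by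
    intro x
    have h1 := le_iSup (fun w => (((⟪-(Bt x), w⟫ : ℝ) : EReal) - F w)) uh
    have e1 : ⟪-(Bt x), uh⟫ = -⟪B uh, x⟫ := by
      rw [inner_neg_left, real_inner_comm uh (Bt x), ← hadj]
    rw [fenchelConj]
    simp only [e1, ha, ← EReal.coe_sub] at h1
    exact h1
  -- quadratic identity
  have hyP : y - P = β • (B uh - vv) := by rw [hy]; abel
  have hquad : ∀ x : Z, 1 / (2 * β) * ‖x - P‖ ^ 2 + ⟪vv, x⟫ - ⟪B uh, x⟫
      = (1 / (2 * β) * ‖y - P‖ ^ 2 + ⟪vv, y⟫ - ⟪B uh, y⟫) + 1 / (2 * β) * ‖x - y‖ ^ 2 := by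
    intro x
    have hx : x - P = (x - y) + (y - P) := by abel
    have h4 : ⟪x - y, y - P⟫ = β * (⟪B uh, x - y⟫ - ⟪vv, x - y⟫) := by
      rw [hyP, real_inner_smul_right, inner_sub_right,
        real_inner_comm (x - y) (B uh), real_inner_comm (x - y) vv]
    have h1 : ⟪vv, x⟫ = ⟪vv, y⟫ + ⟪vv, x - y⟫ := by
      rw [← inner_add_right]; congr 1; abel
    have h2 : ⟪B uh, x⟫ = ⟪B uh, y⟫ + ⟪B uh, x - y⟫ := by
      rw [← inner_add_right]; congr 1; abel
    rw [hx, norm_add_sq_real, h4, h1, h2]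
    field_simp
    ring
  -- conclude
  have h5 := hpmin y
  have h6 : ((1 / (2 * β) * ‖ph - P‖ ^ 2 + ⟪vv, ph⟫ : ℝ) : EReal) + fenchelConj F (-(Bt ph))
      ≤ (((1 / (2 * β) * ‖y - P‖ ^ 2 + ⟪vv, y⟫) + (-⟪B uh, y⟫ - a) : ℝ) : EReal) := by
    refine le_trans h5 ?_
    rw [EReal.coe_add]
    exact add_le_add (le_refl _) hconjy
  have h7 : (((1 / (2 * β) * ‖ph - P‖ ^ 2 + ⟪vv, ph⟫) + (-⟪B uh, ph⟫ - a) : ℝ) : EReal)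
      ≤ ((1 / (2 * β) * ‖ph - P‖ ^ 2 + ⟪vv, ph⟫ : ℝ) : EReal) + fenchelConj F (-(Bt ph)) := by
    rw [EReal.coe_add]
    exact add_le_add (le_refl _) (hconjlb ph)
  have h8 := EReal.coe_le_coe_iff.mp (le_trans h7 h6)
  have h9 := hquad ph
  have h10 : ‖ph - y‖ ^ 2 ≤ 0 := by
    have hb' : 0 < 1 / (2 * β) := by positivity
    nlinarith [h8, h9]
  have h11 : ph - y = 0 := by
    have := norm_nonneg (ph - y)
    have hn : ‖ph - y‖ = 0 := by nlinarith
    exact norm_eq_zero.mp hn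
  have := sub_eq_zero.mp h11
  rw [this]

/-- Theorem 6.2. The dualization-based ADMM for the `J`-block constrained
problem with quadratic last block is a dualization of the generalized Douglas–Rachford
splitting algorithm applied to the dual problem
`min (1/(2β))‖p‖² + ⟨g,p⟩ + Σⱼ Fⱼ*(−Bⱼᵗp)`: if `vⱼ⁽⁰⁾ = qⱼ⁽⁰⁾` and `λ⁽⁰⁾ = p⁽⁰⁾`, then
`λ̂⁽ⁿ⁺¹'ʲ⁾ = p̂⁽ⁿ⁺¹'ʲ⁾` for all `n ≥ 0` and `0 ≤ j ≤ J−1`, while `vⱼ⁽ⁿ⁾ = qⱼ⁽ⁿ⁾` and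
`λ⁽ⁿ⁾ = p⁽ⁿ⁾` for all `n ≥ 1`. Here `Jm` denotes the number `J−1` of nonquadratic blocks,
`Z` denotes the last space `V_J`, and the sequence `u` is defined by the dualization relation
`−Bⱼᵗλ⁽ⁿ⁾ ∈ ∂Fⱼ(uⱼ⁽ⁿ⁾)`. -/
theorem dualization_based_admm_is_dualization_of_generalized_dr
    (Jm : ℕ) {Z : Type*}
    [NormedAddCommGroup Z] [InnerProductSpace ℝ Z] [FiniteDimensional ℝ Z]
    (Vb : Fin Jm → Type*)
    [∀ j, NormedAddCommGroup (Vb j)] [∀ j, InnerProductSpace ℝ (Vb j)]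
    [∀ j, FiniteDimensional ℝ (Vb j)]
    (F : ∀ j : Fin Jm, Vb j → EReal)
    (hF : ∀ j, ProperFn (F j) ∧ ConvexFn (F j) ∧ LowerSemicontinuous (F j))
    (B : ∀ j : Fin Jm, Vb j →ₗ[ℝ] Z) (Bt : ∀ j : Fin Jm, Z →ₗ[ℝ] Vb j)
    (hadj : ∀ (j : Fin Jm) (x : Vb j) (z : Z), ⟪B j x, z⟫ = ⟪x, Bt j z⟫)
    (g : Z) (β τ : ℝ) (hβ : 0 < β) (hτ : 0 < τ)
    -- dualization-based ADMM iterates; `lamhat (n+1) j` is `λ̂⁽ⁿ⁺¹'ʲ⁾`, `0 ≤ j ≤ Jm`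
    (v : ℕ → Fin Jm → Z) (lam : ℕ → Z) (lamhat : ℕ → ℕ → Z)
    (uhat : ℕ → ∀ j : Fin Jm, Vb j)
    (hlamhat0 : ∀ n : ℕ, lamhat (n + 1) 0 = lam n)
    (huhatmin : ∀ (n : ℕ) (j : Fin Jm), ∀ x : Vb j,
      F j (uhat (n + 1) j) + ((⟪lamhat (n + 1) j.1, B j (uhat (n + 1) j)⟫ +
          β / 2 * ‖B j (uhat (n + 1) j) - v n j‖ ^ 2 : ℝ) : EReal) ≤
        F j x + ((⟪lamhat (n + 1) j.1, B j x⟫ + β / 2 * ‖B j x - v n j‖ ^ 2 : ℝ) : EReal))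
    (hvrec : ∀ (n : ℕ) (j : Fin Jm),
      v (n + 1) j = (1 - τ) • v n j + τ • B j (uhat (n + 1) j))
    (hlamhatrec : ∀ (n : ℕ) (j : Fin Jm),
      lamhat (n + 1) (j.1 + 1) = lamhat (n + 1) j.1 + β • (B j (uhat (n + 1) j) - v n j))
    (hlamrec : ∀ n : ℕ, lam (n + 1) = (1 - τ) • lam n + τ • lamhat (n + 1) Jm)
    -- the primal sequence defined by the dualization relation
    (u : ℕ → ∀ j : Fin Jm, Vb j)
    (hu : ∀ n : ℕ, 1 ≤ n → ∀ j : Fin Jm, -(Bt j (lam n)) ∈ subdiff (F j) (u n j))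
    -- generalized Douglas–Rachford iterates for the dual problem
    (p : ℕ → Z) (phat : ℕ → ℕ → Z) (q : ℕ → Fin Jm → Z)
    (hphat0 : ∀ n : ℕ, phat (n + 1) 0 = p n)
    (hphatmin : ∀ (n : ℕ) (j : Fin Jm), ∀ x : Z,
      ((1 / (2 * β) * ‖phat (n + 1) (j.1 + 1) - phat (n + 1) j.1‖ ^ 2 +
          ⟪q n j, phat (n + 1) (j.1 + 1)⟫ : ℝ) : EReal) +
        fenchelConj (F j) (-(Bt j (phat (n + 1) (j.1 + 1)))) ≤
      ((1 / (2 * β) * ‖x - phat (n + 1) j.1‖ ^ 2 + ⟪q n j, x⟫ : ℝ) : EReal) +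
        fenchelConj (F j) (-(Bt j x)))
    (hqrec : ∀ (n : ℕ) (j : Fin Jm),
      q (n + 1) j = q n j + (τ / β) • (phat (n + 1) (j.1 + 1) - phat (n + 1) j.1))
    (hprec : ∀ n : ℕ, p (n + 1) = (1 - τ) • p n + τ • phat (n + 1) Jm)
    -- initial conditions
    (hinitv : ∀ j, v 0 j = q 0 j) (hinitlam : lam 0 = p 0) :
    (∀ (n : ℕ) (j : ℕ), j ≤ Jm → lamhat (n + 1) j = phat (n + 1) j) ∧
      ∀ n : ℕ, 1 ≤ n → (∀ j, v n j = q n j) ∧ lam n = p n := by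
  have step : ∀ n : ℕ, ((∀ j, v n j = q n j) ∧ lam n = p n) →
      ∀ k : ℕ, k ≤ Jm → lamhat (n + 1) k = phat (n + 1) k := by
    intro n hn k
    induction k with
    | zero => intro _; rw [hlamhat0, hphat0, hn.2]
    | succ k ih =>
      intro hk
      have hk' : k < Jm := hk
      have ihk := ih (Nat.le_of_succ_le hk)
      set j : Fin Jm := ⟨k, hk'⟩ with hj
      have hmin := huhatmin n j
      have hj1 : j.1 = k := rfl
      simp only [hj1, ihk] at hmin
      have hpmin := hphatmin n j
      simp only [hj1, ← hn.1 j] at hpmin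
      have hkey := key_step (F j) (hF j).1 (hF j).2.1 (B j) (Bt j) (hadj j) β hβ
        (phat (n + 1) k) (v n j) (uhat (n + 1) j) (phat (n + 1) (k + 1)) hmin hpmin
      have hrec := hlamhatrec n j
      rw [hj1, ihk] at hrec
      rw [hkey, hrec]
  have step2 : ∀ n : ℕ, ((∀ j, v n j = q n j) ∧ lam n = p n) →
      ((∀ j, v (n + 1) j = q (n + 1) j) ∧ lam (n + 1) = p (n + 1)) := by
    intro n hn
    have hall := step n hn
    constructor
    · intro j
      have h1 : phat (n + 1) (j.1 + 1) - phat (n + 1) j.1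
          = β • (B j (uhat (n + 1) j) - v n j) := by
        rw [← hall (j.1 + 1) j.2, ← hall j.1 (le_of_lt j.2), hlamhatrec n j]
        abel
      rw [hvrec, hqrec, h1, ← hn.1 j, smul_smul, div_mul_cancel₀ _ (ne_of_gt hβ)]
      module
    · rw [hlamrec, hprec, hn.2, hall Jm le_rfl]
  have hP : ∀ n : ℕ, (∀ j, v n j = q n j) ∧ lam n = p n := by
    intro n
    induction n with
    | zero => exact ⟨hinitv, hinitlam⟩
    | succ n ih => exact step2 n ih
  exact ⟨fun n k hk => step n (hP n) k hk, fun n _ => hP n⟩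
end
end

section
/- Define u_j^{(n+1)} by the relation −B_jᵗλ^{(n)} ∈ ∂F_j(u_j^{(n+1)}). Then the dualization-based parallel ADMM is a dualization of the parallel Douglas–Rachford splitting algorithm applied to the dual problem min_{p∈V_J} (1/(2β))‖p‖² + ⟨g,p⟩ + Σ_{j=1}^{J−1} F_j*(−B_jᵗp): if v_j^{(0)} = q_j^{(0)} for all j and λ^{(0)} = p^{(0)}, then v_j^{(n)} = q_j^{(n)} for all 1 ≤ j ≤ J−1 and λ^{(n)} = p^{(n)} for all n ≥ 1. -/
open scoped RealInnerProductSpace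

noncomputable section

lemma dr_step {V Z : Type*} [NormedAddCommGroup V] [InnerProductSpace ℝ V]
    [NormedAddCommGroup Z] [InnerProductSpace ℝ Z]
    (F : V → EReal) (hproper : ProperFn F) (hconv : ConvexFn F)
    (B : V →ₗ[ℝ] Z) (Bt : Z →ₗ[ℝ] V)
    (hadj : ∀ (x : V) (z : Z), ⟪B x, z⟫ = ⟪x, Bt z⟫)
    (β : ℝ) (hβ : 0 < β) (lam vv : Z) (u : V)
    (humin : ∀ x : V, F u + ((⟪lam, B u⟫ + β / 2 * ‖B u - vv‖ ^ 2 : ℝ) : EReal) ≤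
      F x + ((⟪lam, B x⟫ + β / 2 * ‖B x - vv‖ ^ 2 : ℝ) : EReal))
    (pjv : Z)
    (hpjmin : ∀ x : Z,
      ((1 / (2 * β) * ‖pjv - lam‖ ^ 2 + ⟪vv, pjv⟫ : ℝ) : EReal) + fenchelConj F (-(Bt pjv)) ≤
      ((1 / (2 * β) * ‖x - lam‖ ^ 2 + ⟪vv, x⟫ : ℝ) : EReal) + fenchelConj F (-(Bt x))) :
    pjv = lam + β • (B u - vv) := by
  have hβ' : β ≠ 0 := ne_of_gt hβ
  obtain ⟨⟨u₀, hu₀⟩, hbot⟩ := hproper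
  -- F u is finite
  have hutop : F u ≠ ⊤ := by
    intro h
    have h1 := humin u₀
    rw [h, EReal.top_add_coe] at h1
    exact (not_le.mpr (EReal.add_lt_top hu₀ (EReal.coe_ne_top _))) h1
  obtain ⟨a, ha⟩ : ∃ a : ℝ, F u = a := by
    lift F u to ℝ using ⟨hutop, hbot u⟩ with a; exact ⟨a, rfl⟩
  set w : Z := lam + β • (B u - vv) with hw
  -- subgradient inequality
  have hsub : ∀ x : V, ((a - ⟪w, B x - B u⟫ : ℝ) : EReal) ≤ F x := by
    intro x
    by_cases hx : F x = ⊤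
    · rw [hx]; exact le_top
    obtain ⟨b, hb⟩ : ∃ b : ℝ, F x = b := by
      lift F x to ℝ using ⟨hx, hbot x⟩ with b; exact ⟨b, rfl⟩
    have hkey : ∀ t : ℝ, 0 < t → t ≤ 1 →
        a ≤ b + ⟪w, B x - B u⟫ + β / 2 * t * ‖B x - B u‖ ^ 2 := by
      intro t ht ht1
      set xt : V := (1 - t) • u + t • x with hxt
      have h1 := humin xt
      have h2 := hconv u x t ht.le ht1
      rw [ha, hb] at h2
      rw [← EReal.coe_mul, ← EReal.coe_mul, ← EReal.coe_add] at h2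
      have h3 : F xt + ((⟪lam, B xt⟫ + β / 2 * ‖B xt - vv‖ ^ 2 : ℝ) : EReal)
          ≤ (((1 - t) * a + t * b : ℝ) : EReal) + ((⟪lam, B xt⟫ + β / 2 * ‖B xt - vv‖ ^ 2 : ℝ) : EReal) :=
        add_le_add_left h2 _
      rw [ha] at h1
      have h4 := le_trans h1 h3
      rw [← EReal.coe_add, ← EReal.coe_add] at h4
      have h5 : a + (⟪lam, B u⟫ + β / 2 * ‖B u - vv‖ ^ 2)
          ≤ (1 - t) * a + t * b + (⟪lam, B xt⟫ + β / 2 * ‖B xt - vv‖ ^ 2) :=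
        EReal.coe_le_coe_iff.mp h4
      have hBxt : B xt = B u + t • (B x - B u) := by
        simp only [hxt, map_add, map_smul, smul_sub]
        module
      have hn : ‖B xt - vv‖ ^ 2 = ‖B u - vv‖ ^ 2 + 2 * t * ⟪B u - vv, B x - B u⟫
          + t ^ 2 * ‖B x - B u‖ ^ 2 := by
        have : B xt - vv = (B u - vv) + t • (B x - B u) := by rw [hBxt]; abel
        rw [this, norm_add_sq_real, real_inner_smul_right, norm_smul]
        simp [mul_pow, abs_of_nonneg ht.le]
        ring
      have hlin : ⟪lam, B xt⟫ = ⟪lam, B u⟫ + t * ⟪lam, B x - B u⟫ := by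
        rw [hBxt, inner_add_right, real_inner_smul_right]
      have hwd : ⟪w, B x - B u⟫ = ⟪lam, B x - B u⟫ + β * ⟪B u - vv, B x - B u⟫ := by
        rw [hw, inner_add_left, real_inner_smul_left]
      rw [hn, hlin] at h5
      rw [hwd]
      have h6 : t * a ≤ t * (b + (⟪lam, B x - B u⟫ + β * ⟪B u - vv, B x - B u⟫)
          + β / 2 * t * ‖B x - B u‖ ^ 2) := by nlinarith [h5]
      have := (mul_le_mul_iff_right₀ ht).mp h6
      linarith
    have hmain : a ≤ b + ⟪w, B x - B u⟫ := by
      apply le_of_forall_pos_le_add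
      intro ε hε
      set D : ℝ := β / 2 * ‖B x - B u‖ ^ 2 with hD
      have hD0 : 0 ≤ D := by positivity
      set t : ℝ := min 1 (ε / (D + 1)) with htdef
      have ht : 0 < t := lt_min one_pos (by positivity)
      have ht1 : t ≤ 1 := min_le_left _ _
      have h7 := hkey t ht ht1
      have h8 : β / 2 * t * ‖B x - B u‖ ^ 2 = t * D := by rw [hD]; ring
      have h9 : t ≤ ε / (D + 1) := min_le_right _ _
      have h10 : t * D ≤ ε := by
        have : t * (D + 1) ≤ ε := by
          calc t * (D + 1) ≤ (ε / (D + 1)) * (D + 1) := by nlinarith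
          _ = ε := by field_simp
        nlinarith
      linarith [h7, h8 ▸ h7]
    rw [hb]
    exact EReal.coe_le_coe_iff.mpr (by linarith)
  -- Fenchel-Young inequality
  have hFY : ∀ (y : V) (x : V), ((⟪y, x⟫ : ℝ) : EReal) - F x ≤ fenchelConj F y := by
    intro y x
    exact le_iSup (fun x : V => (((⟪y, x⟫ : ℝ) : EReal) - F x)) x
  -- value of the conjugate at -Bt w
  have hBtw : ∀ x : V, ⟪-(Bt w), x⟫ = -⟪w, B x⟫ := by
    intro x
    rw [inner_neg_left, real_inner_comm, ← hadj, real_inner_comm]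
  have hstar : fenchelConj F (-(Bt w)) = ((-⟪w, B u⟫ - a : ℝ) : EReal) := by
    apply le_antisymm
    · apply iSup_le
      intro x
      by_cases hx : F x = ⊤
      · rw [hx]
        simp
      obtain ⟨b, hb⟩ : ∃ b : ℝ, F x = b := by
        lift F x to ℝ using ⟨hx, hbot x⟩ with b; exact ⟨b, rfl⟩
      rw [hb, ← EReal.coe_sub]
      apply EReal.coe_le_coe_iff.mpr
      have h1 := EReal.coe_le_coe_iff.mp (hb ▸ hsub x)
      have h2 : ⟪w, B x - B u⟫ = ⟪w, B x⟫ - ⟪w, B u⟫ := inner_sub_right w _ _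
      rw [hBtw x]
      linarith
    · have h1 := hFY (-(Bt w)) u
      rw [ha, ← EReal.coe_sub, hBtw u] at h1
      exact h1
  -- minimality of w with a quadratic gap
  set Gw : ℝ := 1 / (2 * β) * ‖w - lam‖ ^ 2 + ⟪vv, w⟫ + (-⟪w, B u⟫ - a) with hGw
  have hmin : ∀ x : Z, ((Gw + 1 / (2 * β) * ‖x - w‖ ^ 2 : ℝ) : EReal) ≤
      ((1 / (2 * β) * ‖x - lam‖ ^ 2 + ⟪vv, x⟫ : ℝ) : EReal) + fenchelConj F (-(Bt x)) := by
    intro x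
    have hFYx : ((- ⟪B u, x⟫ - a : ℝ) : EReal) ≤ fenchelConj F (-(Bt x)) := by
      have h1 := hFY (-(Bt x)) u
      rw [ha, ← EReal.coe_sub] at h1
      have h2 : ⟪-(Bt x), u⟫ = -⟪B u, x⟫ := by
        rw [inner_neg_left]
        rw [hadj u x]
        rw [real_inner_comm]
      rwa [h2] at h1
    have h3 : ((Gw + 1 / (2 * β) * ‖x - w‖ ^ 2 : ℝ) : EReal) ≤
        ((1 / (2 * β) * ‖x - lam‖ ^ 2 + ⟪vv, x⟫ : ℝ) : EReal) + ((- ⟪B u, x⟫ - a : ℝ) : EReal) := by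
      rw [← EReal.coe_add]
      apply EReal.coe_le_coe_iff.mpr
      -- real identity/inequality
      set z : Z := B u - vv with hz
      have e1 : ‖w - lam‖ ^ 2 = β ^ 2 * ‖z‖ ^ 2 := by
        have : w - lam = β • z := by rw [hw]; abel
        rw [this, norm_smul]
        simp [mul_pow, abs_of_nonneg hβ.le]
      have e2 : ‖x - w‖ ^ 2 = ‖x - lam‖ ^ 2 - 2 * β * ⟪x - lam, z⟫ + β ^ 2 * ‖z‖ ^ 2 := by
        have h4 : x - w = (x - lam) - β • z := by rw [hw]; abel
        rw [h4, norm_sub_sq_real, real_inner_smul_right, norm_smul]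
        simp [mul_pow, abs_of_nonneg hβ.le]
        ring
      have e3 : ⟪vv, w⟫ = ⟪vv, lam⟫ + β * ⟪vv, z⟫ := by
        rw [hw, inner_add_right, real_inner_smul_right]
      have e4 : ⟪w, B u⟫ = ⟪lam, B u⟫ + β * ⟪z, B u⟫ := by
        rw [hw, inner_add_left, real_inner_smul_left]
      have e5 : ⟪x - lam, z⟫ = ⟪z, x⟫ - ⟪z, lam⟫ := by
        rw [inner_sub_left, real_inner_comm x z]; ring_nf
        rw [real_inner_comm lam z]
      have e6 : ⟪B u, x⟫ - ⟪vv, x⟫ = ⟪z, x⟫ := by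
        rw [hz, inner_sub_left]
      have e7 : ⟪B u, lam⟫ - ⟪vv, lam⟫ = ⟪z, lam⟫ := by
        rw [hz, inner_sub_left]
      have e8 : ⟪z, B u⟫ - ⟪z, vv⟫ = ‖z‖ ^ 2 := by
        rw [← inner_sub_right, ← hz, real_inner_self_eq_norm_sq]
      have e10 : ⟪lam, B u⟫ = ⟪B u, lam⟫ := real_inner_comm (B u) lam
      rw [hGw, e1, e2, e3, e4, e5, e10]
      have f1 : 1 / (2 * β) * (β ^ 2 * ‖z‖ ^ 2) = β / 2 * ‖z‖ ^ 2 := by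
        field_simp
      have f2 : 1 / (2 * β) * (‖x - lam‖ ^ 2 - 2 * β * (⟪z, x⟫ - ⟪z, lam⟫) + β ^ 2 * ‖z‖ ^ 2)
          = 1 / (2 * β) * ‖x - lam‖ ^ 2 - (⟪z, x⟫ - ⟪z, lam⟫) + β / 2 * ‖z‖ ^ 2 := by
        field_simp
      rw [f1, f2]
      have f3 : β * ⟪z, B u⟫ - β * ⟪z, vv⟫ = β * ‖z‖ ^ 2 := by
        rw [← mul_sub, e8]
      have f4 : β * ⟪vv, z⟫ = β * ⟪z, vv⟫ := by rw [real_inner_comm vv z]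
      linarith [e6, e7, f3, f4]
    exact le_trans h3 (add_le_add_right hFYx _)
  -- conclude
  have h11 := hpjmin w
  rw [hstar, ← EReal.coe_add] at h11
  have h12 := hmin pjv
  have h13 := le_trans h12 h11
  have h14 : Gw + 1 / (2 * β) * ‖pjv - w‖ ^ 2 ≤
      1 / (2 * β) * ‖w - lam‖ ^ 2 + ⟪vv, w⟫ + (-⟪w, B u⟫ - a) :=
    EReal.coe_le_coe_iff.mp h13
  rw [hGw] at h14
  have h15 : ‖pjv - w‖ ^ 2 ≤ 0 := by
    have hpos : 0 < 1 / (2 * β) := by positivity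
    nlinarith
  have h16 : pjv - w = 0 := by
    have := norm_nonneg (pjv - w)
    have : ‖pjv - w‖ = 0 := by nlinarith
    exact norm_eq_zero.mp this
  have := sub_eq_zero.mp h16
  rw [this]

/-- Theorem 6.4. The dualization-based parallel ADMM is a dualization of
the parallel Douglas–Rachford splitting algorithm applied to the dual problem
`min (1/(2β))‖p‖² + ⟨g,p⟩ + Σⱼ Fⱼ*(−Bⱼᵗp)`: if `vⱼ⁽⁰⁾ = qⱼ⁽⁰⁾` for all `j` and
`λ⁽⁰⁾ = p⁽⁰⁾`, then `vⱼ⁽ⁿ⁾ = qⱼ⁽ⁿ⁾` for all `j` and `λ⁽ⁿ⁾ = p⁽ⁿ⁾` for all `n ≥ 1`.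
`Jm` denotes the number `J−1` of blocks and `Z` the last space `V_J`; the sequence `u` is
defined by the dualization relation `−Bⱼᵗλ⁽ⁿ⁾ ∈ ∂Fⱼ(uⱼ⁽ⁿ⁺¹⁾)`. -/
theorem dualization_based_parallel_admm_is_dualization_of_parallel_dr
    (Jm : ℕ) {Z : Type*}
    [NormedAddCommGroup Z] [InnerProductSpace ℝ Z] [FiniteDimensional ℝ Z]
    (Vb : Fin Jm → Type*)
    [∀ j, NormedAddCommGroup (Vb j)] [∀ j, InnerProductSpace ℝ (Vb j)]
    [∀ j, FiniteDimensional ℝ (Vb j)]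
    (F : ∀ j : Fin Jm, Vb j → EReal)
    (hF : ∀ j, ProperFn (F j) ∧ ConvexFn (F j) ∧ LowerSemicontinuous (F j))
    (B : ∀ j : Fin Jm, Vb j →ₗ[ℝ] Z) (Bt : ∀ j : Fin Jm, Z →ₗ[ℝ] Vb j)
    (hadj : ∀ (j : Fin Jm) (x : Vb j) (z : Z), ⟪B j x, z⟫ = ⟪x, Bt j z⟫)
    (g : Z) (β τ : ℝ) (hβ : 0 < β) (hτ : 0 < τ)
    -- dualization-based parallel ADMM iterates
    (v : ℕ → Fin Jm → Z) (lam : ℕ → Z) (u : ℕ → ∀ j : Fin Jm, Vb j)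
    (humin : ∀ (n : ℕ) (j : Fin Jm), ∀ x : Vb j,
      F j (u (n + 1) j) + ((⟪lam n, B j (u (n + 1) j)⟫ +
          β / 2 * ‖B j (u (n + 1) j) - v n j‖ ^ 2 : ℝ) : EReal) ≤
        F j x + ((⟪lam n, B j x⟫ + β / 2 * ‖B j x - v n j‖ ^ 2 : ℝ) : EReal))
    (hvrec : ∀ (n : ℕ) (j : Fin Jm),
      v (n + 1) j = (1 - τ) • v n j + τ • B j (u (n + 1) j))
    (hlamrec : ∀ n : ℕ,
      lam (n + 1) = lam n + (τ * β) • ∑ j, (B j (u (n + 1) j) - v n j))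
    -- the dualization relation defining the primal sequence `u`
    (hu : ∀ n : ℕ, ∀ j : Fin Jm, -(Bt j (lam n)) ∈ subdiff (F j) (u (n + 1) j))
    -- parallel Douglas–Rachford iterates for the dual problem
    (p : ℕ → Z) (pj : ℕ → Fin Jm → Z) (q : ℕ → Fin Jm → Z)
    (hpjmin : ∀ (n : ℕ) (j : Fin Jm), ∀ x : Z,
      ((1 / (2 * β) * ‖pj (n + 1) j - p n‖ ^ 2 + ⟪q n j, pj (n + 1) j⟫ : ℝ) : EReal) +
        fenchelConj (F j) (-(Bt j (pj (n + 1) j))) ≤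
      ((1 / (2 * β) * ‖x - p n‖ ^ 2 + ⟪q n j, x⟫ : ℝ) : EReal) +
        fenchelConj (F j) (-(Bt j x)))
    (hqrec : ∀ (n : ℕ) (j : Fin Jm),
      q (n + 1) j = q n j + (τ / β) • (pj (n + 1) j - p n))
    (hprec : ∀ n : ℕ, p (n + 1) = (1 - τ * Jm) • p n + τ • ∑ j, pj (n + 1) j)
    -- initial conditions
    (hinitv : ∀ j, v 0 j = q 0 j) (hinitlam : lam 0 = p 0) :
    ∀ n : ℕ, 1 ≤ n → (∀ j, v n j = q n j) ∧ lam n = p n := by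
  have key : ∀ n : ℕ, (∀ j, v n j = q n j) ∧ lam n = p n := by
    intro n
    induction n with
    | zero => exact ⟨hinitv, hinitlam⟩
    | succ n ih =>
      obtain ⟨ihv, ihl⟩ := ih
      have hβ' : β ≠ 0 := ne_of_gt hβ
      have hpj : ∀ j, pj (n + 1) j = lam n + β • (B j (u (n + 1) j) - v n j) := by
        intro j
        refine dr_step (F j) (hF j).1 (hF j).2.1 (B j) (Bt j) (hadj j) β hβ
          (lam n) (v n j) (u (n + 1) j) (humin n j) (pj (n + 1) j) ?_
        intro x
        have := hpjmin n j x
        rwa [← ihl, ← ihv j] at this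
      constructor
      · intro j
        rw [hvrec n j, hqrec n j, hpj j, ihl, ← ihv j]
        have h1 : p n + β • (B j (u (n + 1) j) - v n j) - p n
            = β • (B j (u (n + 1) j) - v n j) := by abel
        rw [h1, smul_smul, div_mul_cancel₀ τ hβ']
        module
      · rw [hlamrec n, hprec n]
        have hsum : ∑ j, pj (n + 1) j
            = (Jm : ℝ) • p n + β • ∑ j, (B j (u (n + 1) j) - v n j) := by
          rw [Finset.sum_congr rfl fun j _ => hpj j]
          rw [Finset.sum_add_distrib, Finset.sum_const, Finset.smul_sum]
          congr 1
          · simp [ihl]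
            rw [← Nat.cast_smul_eq_nsmul ℝ]
        rw [hsum, ihl]
        rw [smul_add, smul_smul, smul_smul]
        match_scalars <;> ring
  intro n _
  exact key n
end
end

section
/- If u^{(0)} = ½(v₁^{(0)} + v₂^{(0)}), then u^{(n)} = ½(v₁^{(n)} + v₂^{(n)}) for all n ≥ 0, and the sequence v^{(n)} := 2u^{(n)} − v₁^{(n)} satisfies, for all n ≥ 0: u^{(n+1/2)} = prox_{Ḡ₁}(v^{(n)}), u^{(n+1)} = prox_{Ḡ₂}(2u^{(n+1/2)} − v^{(n)}), and v^{(n+1)} = (2 prox_{Ḡ₂} − I)(2 prox_{Ḡ₁} − I)(v^{(n)}). In other words, the generalized Peaceman–Rachford splitting algorithm applied to two convex functions reduces to the classical Peaceman–Rachford splitting for Ḡ₁ + Ḡ₂. -/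
open scoped RealInnerProductSpace

noncomputable section

lemma ereal_shift (a b k : ℝ) (p q : EReal)
    (h : ((a : ℝ) : EReal) + p ≤ ((b : ℝ) : EReal) + q) :
    (((a - k : ℝ)) : EReal) + p ≤ (((b - k : ℝ)) : EReal) + q := by
  have e : ∀ r : ℝ, (((r - k : ℝ)) : EReal) = (r : EReal) + ((-k : ℝ) : EReal) := by
    intro r; rw [sub_eq_add_neg, EReal.coe_add]
  rw [e, e, add_right_comm, add_right_comm (b : EReal)]
  exact add_le_add_left h _

lemma gen_to_prox {V : Type*} [NormedAddCommGroup V] [InnerProductSpace ℝ V]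
    (G : V → EReal) (c w y : V)
    (h : ∀ x : V, ((‖y - c‖ ^ 2 + ⟪w, y⟫ : ℝ) : EReal) + G y ≤
      ((‖x - c‖ ^ 2 + ⟪w, x⟫ : ℝ) : EReal) + G x) :
    ∀ x : V, ((1 / 2 * ‖y - ((2 : ℝ) • c - w)‖ ^ 2 + 1 / 2 * ‖y‖ ^ 2 : ℝ) : EReal) + G y ≤
      ((1 / 2 * ‖x - ((2 : ℝ) • c - w)‖ ^ 2 + 1 / 2 * ‖x‖ ^ 2 : ℝ) : EReal) + G x := by
  intro x
  set z : V := (2 : ℝ) • c - w with hz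
  have hid : ∀ t : V, 1 / 2 * ‖t - z‖ ^ 2 + 1 / 2 * ‖t‖ ^ 2 =
      (‖t - c‖ ^ 2 + ⟪w, t⟫) - (‖c‖ ^ 2 - 1 / 2 * ‖z‖ ^ 2) := by
    intro t
    have h1 := norm_sub_sq_real t z
    have h2 := norm_sub_sq_real t c
    have h3 : ⟪t, z⟫ = 2 * ⟪t, c⟫ - ⟪t, w⟫ := by
      rw [hz, inner_sub_right, real_inner_smul_right]
    have h4 : ⟪w, t⟫ = ⟪t, w⟫ := real_inner_comm _ _
    rw [h1, h2, h3, h4]; ring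
  rw [hid y, hid x]
  exact ereal_shift _ _ _ _ _ (h x)

/-- For two convex functions (`F(u) = ‖u‖²`, `J = 2`, `B_j = I`), the
generalized Peaceman–Rachford splitting algorithm reduces to the classical Peaceman–Rachford
splitting for `Ḡ₁ + Ḡ₂`, where `Ḡⱼ(u) = Gⱼ(u) + ½‖u‖²`: if `u⁽⁰⁾ = ½(v₁⁽⁰⁾ + v₂⁽⁰⁾)`,
then `u⁽ⁿ⁾ = ½(v₁⁽ⁿ⁾ + v₂⁽ⁿ⁾)` for all `n ≥ 0`, and the sequence `v⁽ⁿ⁾ = 2u⁽ⁿ⁾ − v₁⁽ⁿ⁾`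
satisfies `u⁽ⁿ⁺¹ᐟ²⁾ = prox_{Ḡ₁}(v⁽ⁿ⁾)`, `u⁽ⁿ⁺¹⁾ = prox_{Ḡ₂}(2u⁽ⁿ⁺¹ᐟ²⁾ − v⁽ⁿ⁾)` and
`v⁽ⁿ⁺¹⁾ = (2 prox_{Ḡ₂} − I)(2 prox_{Ḡ₁} − I)(v⁽ⁿ⁾)`.
Here `prox₁, prox₂` are the proximal operators of `Ḡ₁, Ḡ₂`, characterized as unique
minimizers, and `uh n` denotes `u⁽ⁿ⁺¹ᐟ²⁾`. -/
theorem generalized_pr_two_blocks_is_classical_pr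
    {V : Type*} [NormedAddCommGroup V] [InnerProductSpace ℝ V] [FiniteDimensional ℝ V]
    (G₁ G₂ : V → EReal)
    (hG₁ : ProperFn G₁ ∧ ConvexFn G₁ ∧ LowerSemicontinuous G₁)
    (hG₂ : ProperFn G₂ ∧ ConvexFn G₂ ∧ LowerSemicontinuous G₂)
    -- the proximal operators of `Ḡ₁` and `Ḡ₂`
    (prox₁ prox₂ : V → V)
    (hprox₁ : ∀ z : V,
      (∀ x : V, ((1 / 2 * ‖prox₁ z - z‖ ^ 2 + 1 / 2 * ‖prox₁ z‖ ^ 2 : ℝ) : EReal) +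
          G₁ (prox₁ z) ≤
        ((1 / 2 * ‖x - z‖ ^ 2 + 1 / 2 * ‖x‖ ^ 2 : ℝ) : EReal) + G₁ x) ∧
      ∀ y : V, (∀ x : V, ((1 / 2 * ‖y - z‖ ^ 2 + 1 / 2 * ‖y‖ ^ 2 : ℝ) : EReal) + G₁ y ≤
          ((1 / 2 * ‖x - z‖ ^ 2 + 1 / 2 * ‖x‖ ^ 2 : ℝ) : EReal) + G₁ x) → y = prox₁ z)
    (hprox₂ : ∀ z : V,
      (∀ x : V, ((1 / 2 * ‖prox₂ z - z‖ ^ 2 + 1 / 2 * ‖prox₂ z‖ ^ 2 : ℝ) : EReal) +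
          G₂ (prox₂ z) ≤
        ((1 / 2 * ‖x - z‖ ^ 2 + 1 / 2 * ‖x‖ ^ 2 : ℝ) : EReal) + G₂ x) ∧
      ∀ y : V, (∀ x : V, ((1 / 2 * ‖y - z‖ ^ 2 + 1 / 2 * ‖y‖ ^ 2 : ℝ) : EReal) + G₂ y ≤
          ((1 / 2 * ‖x - z‖ ^ 2 + 1 / 2 * ‖x‖ ^ 2 : ℝ) : EReal) + G₂ x) → y = prox₂ z)
    -- generalized Peaceman–Rachford iterates: `uh n` is `u⁽ⁿ⁺¹ᐟ²⁾`
    (u uh v₁ v₂ : ℕ → V)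
    (huhmin : ∀ n : ℕ, ∀ x : V,
      ((‖uh n - u n‖ ^ 2 + ⟪v₁ n, uh n⟫ : ℝ) : EReal) + G₁ (uh n) ≤
        ((‖x - u n‖ ^ 2 + ⟪v₁ n, x⟫ : ℝ) : EReal) + G₁ x)
    (hv₁rec : ∀ n : ℕ, v₁ (n + 1) = v₁ n + (2 : ℝ) • (uh n - u n))
    (humin : ∀ n : ℕ, ∀ x : V,
      ((‖u (n + 1) - uh n‖ ^ 2 + ⟪v₂ n, u (n + 1)⟫ : ℝ) : EReal) + G₂ (u (n + 1)) ≤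
        ((‖x - uh n‖ ^ 2 + ⟪v₂ n, x⟫ : ℝ) : EReal) + G₂ x)
    (hv₂rec : ∀ n : ℕ, v₂ (n + 1) = v₂ n + (2 : ℝ) • (u (n + 1) - uh n))
    -- initial condition
    (hinit : u 0 = (1 / 2 : ℝ) • (v₁ 0 + v₂ 0)) :
    (∀ n : ℕ, u n = (1 / 2 : ℝ) • (v₁ n + v₂ n)) ∧
      ∀ n : ℕ,
        uh n = prox₁ ((2 : ℝ) • u n - v₁ n) ∧
        u (n + 1) = prox₂ ((2 : ℝ) • uh n - ((2 : ℝ) • u n - v₁ n)) ∧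
        (2 : ℝ) • u (n + 1) - v₁ (n + 1) =
          (2 : ℝ) • prox₂ ((2 : ℝ) • prox₁ ((2 : ℝ) • u n - v₁ n) -
              ((2 : ℝ) • u n - v₁ n)) -
            ((2 : ℝ) • prox₁ ((2 : ℝ) • u n - v₁ n) - ((2 : ℝ) • u n - v₁ n)) := by
  have hmean : ∀ n : ℕ, u n = (1 / 2 : ℝ) • (v₁ n + v₂ n) := by
    intro n
    induction n with
    | zero => exact hinit
    | succ n ih => rw [hv₁rec, hv₂rec, ih]; module
  refine ⟨hmean, fun n => ?_⟩
  have hv : (2 : ℝ) • u n - v₁ n = v₂ n := by rw [hmean n]; module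
  have huh : uh n = prox₁ ((2 : ℝ) • u n - v₁ n) :=
    ((hprox₁ _).2 _ (gen_to_prox G₁ (u n) (v₁ n) (uh n) (huhmin n)))
  have hu1 : u (n + 1) = prox₂ ((2 : ℝ) • uh n - ((2 : ℝ) • u n - v₁ n)) := by
    rw [hv]
    exact ((hprox₂ _).2 _ (gen_to_prox G₂ (uh n) (v₂ n) (u (n + 1)) (humin n)))
  refine ⟨huh, hu1, ?_⟩
  rw [← huh, ← hu1, hv₁rec]
  module
end
end

section
/- If u^{(0)} = ½(v₁^{(0)} + v₂^{(0)}), then the sequence {v₂^{(n)}} generated by the generalized Douglas–Rachford algorithm for two convex functions obeys the classical Douglas–Rachford recursion: v₂^{(n+1)} = (1 − τ)v₂^{(n)} + τ(2 prox_{Ḡ₂} − I)(2 prox_{Ḡ₁} − I)(v₂^{(n)}) for all n ≥ 0; that is, the generalized Douglas–Rachford splitting algorithm reduces to the classical Douglas–Rachford splitting for Ḡ₁ + Ḡ₂. -/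
open scoped RealInnerProductSpace

noncomputable section

/-- Shifting a DR-subproblem minimizer to a prox-form minimizer. -/
lemma dr_shift_min {V : Type*} [NormedAddCommGroup V] [InnerProductSpace ℝ V]
    (G : V → EReal) (y a v z : V) (hz : z = (2 : ℝ) • a - v)
    (h : ∀ x : V, ((‖y - a‖ ^ 2 + ⟪v, y⟫ : ℝ) : EReal) + G y ≤
        ((‖x - a‖ ^ 2 + ⟪v, x⟫ : ℝ) : EReal) + G x) :
    ∀ x : V, ((1 / 2 * ‖y - z‖ ^ 2 + 1 / 2 * ‖y‖ ^ 2 : ℝ) : EReal) + G y ≤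
      ((1 / 2 * ‖x - z‖ ^ 2 + 1 / 2 * ‖x‖ ^ 2 : ℝ) : EReal) + G x := by
  obtain ⟨c, key⟩ : ∃ c : ℝ, ∀ w : V, (1 / 2 * ‖w - z‖ ^ 2 + 1 / 2 * ‖w‖ ^ 2 : ℝ) =
      (‖w - a‖ ^ 2 + ⟪v, w⟫) + c := by
    subst hz
    refine ⟨1 / 2 * ‖(2 : ℝ) • a - v‖ ^ 2 - ‖a‖ ^ 2, fun w => ?_⟩
    simp only [norm_sub_sq_real, inner_sub_right, inner_sub_left, real_inner_smul_right,
      real_inner_smul_left, real_inner_comm v w, real_inner_self_eq_norm_sq, norm_smul,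
      Real.norm_ofNat, mul_pow]
    ring
  intro x
  calc ((1 / 2 * ‖y - z‖ ^ 2 + 1 / 2 * ‖y‖ ^ 2 : ℝ) : EReal) + G y
      = (((‖y - a‖ ^ 2 + ⟪v, y⟫ : ℝ) : EReal) + G y) + (c : EReal) := by
        rw [key y]; simp only [EReal.coe_add]; abel
    _ ≤ (((‖x - a‖ ^ 2 + ⟪v, x⟫ : ℝ) : EReal) + G x) + (c : EReal) :=
        add_le_add_left (h x) _
    _ = ((1 / 2 * ‖x - z‖ ^ 2 + 1 / 2 * ‖x‖ ^ 2 : ℝ) : EReal) + G x := by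
        rw [key x]; simp only [EReal.coe_add]; abel


/-- For two convex functions (`F(u) = ‖u‖²`, `J = 2`, `B_j = I`), the
generalized Douglas–Rachford splitting algorithm reduces to the classical Douglas–Rachford
splitting for `Ḡ₁ + Ḡ₂`, where `Ḡⱼ(u) = Gⱼ(u) + ½‖u‖²`: if `u⁽⁰⁾ = ½(v₁⁽⁰⁾ + v₂⁽⁰⁾)`,
then `v₂⁽ⁿ⁺¹⁾ = (1 − τ)v₂⁽ⁿ⁾ + τ(2 prox_{Ḡ₂} − I)(2 prox_{Ḡ₁} − I)(v₂⁽ⁿ⁾)` for all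
`n ≥ 0`. Here `prox₁, prox₂` are the proximal operators of `Ḡ₁, Ḡ₂`, characterized as
unique minimizers, and `uh (n+1) j` denotes `û⁽ⁿ⁺¹'ʲ⁾` for `j = 0, 1, 2`. -/

theorem generalized_dr_two_blocks_is_classical_dr
    {V : Type*} [NormedAddCommGroup V] [InnerProductSpace ℝ V] [FiniteDimensional ℝ V]
    (G₁ G₂ : V → EReal)
    (hG₁ : ProperFn G₁ ∧ ConvexFn G₁ ∧ LowerSemicontinuous G₁)
    (hG₂ : ProperFn G₂ ∧ ConvexFn G₂ ∧ LowerSemicontinuous G₂)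
    (τ : ℝ) (hτ : 0 < τ)
    -- the proximal operators of `Ḡ₁` and `Ḡ₂`
    (prox₁ prox₂ : V → V)
    (hprox₁ : ∀ z : V,
      (∀ x : V, ((1 / 2 * ‖prox₁ z - z‖ ^ 2 + 1 / 2 * ‖prox₁ z‖ ^ 2 : ℝ) : EReal) +
          G₁ (prox₁ z) ≤
        ((1 / 2 * ‖x - z‖ ^ 2 + 1 / 2 * ‖x‖ ^ 2 : ℝ) : EReal) + G₁ x) ∧
      ∀ y : V, (∀ x : V, ((1 / 2 * ‖y - z‖ ^ 2 + 1 / 2 * ‖y‖ ^ 2 : ℝ) : EReal) + G₁ y ≤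
          ((1 / 2 * ‖x - z‖ ^ 2 + 1 / 2 * ‖x‖ ^ 2 : ℝ) : EReal) + G₁ x) → y = prox₁ z)
    (hprox₂ : ∀ z : V,
      (∀ x : V, ((1 / 2 * ‖prox₂ z - z‖ ^ 2 + 1 / 2 * ‖prox₂ z‖ ^ 2 : ℝ) : EReal) +
          G₂ (prox₂ z) ≤
        ((1 / 2 * ‖x - z‖ ^ 2 + 1 / 2 * ‖x‖ ^ 2 : ℝ) : EReal) + G₂ x) ∧
      ∀ y : V, (∀ x : V, ((1 / 2 * ‖y - z‖ ^ 2 + 1 / 2 * ‖y‖ ^ 2 : ℝ) : EReal) + G₂ y ≤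
          ((1 / 2 * ‖x - z‖ ^ 2 + 1 / 2 * ‖x‖ ^ 2 : ℝ) : EReal) + G₂ x) → y = prox₂ z)
    -- generalized Douglas–Rachford iterates: `uh (n+1) j` is `û⁽ⁿ⁺¹'ʲ⁾`, `j = 0, 1, 2`
    (u : ℕ → V) (uh : ℕ → ℕ → V) (v₁ v₂ : ℕ → V)
    (huh0 : ∀ n : ℕ, uh (n + 1) 0 = u n)
    (huh1min : ∀ n : ℕ, ∀ x : V,
      ((‖uh (n + 1) 1 - uh (n + 1) 0‖ ^ 2 + ⟪v₁ n, uh (n + 1) 1⟫ : ℝ) : EReal) +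
          G₁ (uh (n + 1) 1) ≤
        ((‖x - uh (n + 1) 0‖ ^ 2 + ⟪v₁ n, x⟫ : ℝ) : EReal) + G₁ x)
    (huh2min : ∀ n : ℕ, ∀ x : V,
      ((‖uh (n + 1) 2 - uh (n + 1) 1‖ ^ 2 + ⟪v₂ n, uh (n + 1) 2⟫ : ℝ) : EReal) +
          G₂ (uh (n + 1) 2) ≤
        ((‖x - uh (n + 1) 1‖ ^ 2 + ⟪v₂ n, x⟫ : ℝ) : EReal) + G₂ x)
    (hv₁rec : ∀ n : ℕ, v₁ (n + 1) = v₁ n + (2 * τ) • (uh (n + 1) 1 - uh (n + 1) 0))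
    (hv₂rec : ∀ n : ℕ, v₂ (n + 1) = v₂ n + (2 * τ) • (uh (n + 1) 2 - uh (n + 1) 1))
    (hurec : ∀ n : ℕ, u (n + 1) = (1 / 2 : ℝ) • (v₁ (n + 1) + v₂ (n + 1)))
    -- initial condition
    (hinit : u 0 = (1 / 2 : ℝ) • (v₁ 0 + v₂ 0)) :
    ∀ n : ℕ, v₂ (n + 1) = (1 - τ) • v₂ n +
      τ • ((2 : ℝ) • prox₂ ((2 : ℝ) • prox₁ (v₂ n) - v₂ n) -
        ((2 : ℝ) • prox₁ (v₂ n) - v₂ n)) := by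
  have hu : ∀ n : ℕ, u n = (1 / 2 : ℝ) • (v₁ n + v₂ n) := by
    intro n; cases n with
    | zero => exact hinit
    | succ m => exact hurec m
  intro n
  -- identify uh (n+1) 1 with prox₁ (v₂ n)
  have hv2eq : v₂ n = (2 : ℝ) • uh (n + 1) 0 - v₁ n := by
    rw [huh0 n, hu n]
    module
  have h1 : uh (n + 1) 1 = prox₁ (v₂ n) :=
    (hprox₁ (v₂ n)).2 _ (dr_shift_min G₁ (uh (n + 1) 1) (uh (n + 1) 0) (v₁ n) (v₂ n)
      hv2eq (huh1min n))
  set w : V := (2 : ℝ) • prox₁ (v₂ n) - v₂ n with hw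
  have h2 : uh (n + 1) 2 = prox₂ w :=
    (hprox₂ w).2 _ (dr_shift_min G₂ (uh (n + 1) 2) (uh (n + 1) 1) (v₂ n) w
      (by rw [h1]) (huh2min n))
  rw [hv₂rec n, h1, h2, hw]
  module
end
end
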